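/- arXiv:1401.4853 — 6 statements merged into one kernel-verified Lean document; each statement's English description precedes it below -/
import Mathlib

section
/- For any real number z tending to infinity and fixed reals a, b, the ratio Γ(z+a)/Γ(z+b) is asymptotically equivalent to z^{a-b}, i.e. lim_{z→∞} Γ(z+a)/(Γ(z+b)·z^{a-b}) = 1. -/
open Real Filter

private def GRP (c : ℝ) : Prop :=
  Tendsto (fun w : ℝ => Real.Gamma (w + c) / (Real.Gamma w * w ^ c)) atTop (nhds 1)

private lemma gamma_mul_convex {x y θ : ℝ} (hx : 0 < x) (hy : 0 < y)
    (hθ : 0 ≤ θ) (hθ1 : θ ≤ 1) :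
    Real.Gamma (θ * x + (1 - θ) * y) ≤ Real.Gamma x ^ θ * Real.Gamma y ^ (1 - θ) := by
  have h := Real.convexOn_log_Gamma.2 (Set.mem_Ioi.2 hx) (Set.mem_Ioi.2 hy)
    hθ (show (0:ℝ) ≤ 1 - θ by linarith) (by ring)
  have hcomb : 0 < θ * x + (1 - θ) * y := by
    rcases lt_or_eq_of_le hθ1 with h' | h'
    · have h1 : 0 < (1 - θ) * y := mul_pos (by linarith) hy
      nlinarith [mul_nonneg hθ hx.le]
    · rw [← h']; nlinarith
  have hgx := Real.Gamma_pos_of_pos hx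
  have hgy := Real.Gamma_pos_of_pos hy
  have hgc := Real.Gamma_pos_of_pos hcomb
  calc Real.Gamma (θ * x + (1 - θ) * y)
      = Real.exp (Real.log (Real.Gamma (θ * x + (1 - θ) * y))) := (Real.exp_log hgc).symm
    _ ≤ Real.exp (θ * Real.log (Real.Gamma x) + (1 - θ) * Real.log (Real.Gamma y)) := by
        apply Real.exp_le_exp.2
        simpa [smul_eq_mul, Function.comp] using h
    _ = Real.Gamma x ^ θ * Real.Gamma y ^ (1 - θ) := by
        rw [Real.rpow_def_of_pos hgx, Real.rpow_def_of_pos hgy, ← Real.exp_add]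
        congr 1; ring

private lemma tendsto_div_add_self (c : ℝ) :
    Tendsto (fun w : ℝ => w / (w + c)) atTop (nhds 1) := by
  have h1 : Tendsto (fun w : ℝ => c / (w + c)) atTop (nhds 0) :=
    Tendsto.div_atTop tendsto_const_nhds (tendsto_atTop_add_const_right _ c tendsto_id)
  have h2 : Tendsto (fun w : ℝ => 1 - c / (w + c)) atTop (nhds 1) := by
    simpa using (tendsto_const_nhds (x := (1:ℝ))).sub h1
  apply h2.congr'
  filter_upwards [eventually_gt_atTop (-c)] with w hw
  have : w + c ≠ 0 := by linarith
  field_simp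
  ring

private lemma tendsto_add_div_self (c : ℝ) :
    Tendsto (fun w : ℝ => (w + c) / w) atTop (nhds 1) := by
  have h1 : Tendsto (fun w : ℝ => c / w) atTop (nhds 0) :=
    Tendsto.div_atTop tendsto_const_nhds tendsto_id
  have h2 : Tendsto (fun w : ℝ => 1 + c / w) atTop (nhds 1) := by
    simpa using (tendsto_const_nhds (x := (1:ℝ))).add h1
  apply h2.congr'
  filter_upwards [eventually_gt_atTop 0] with w hw
  have : w ≠ 0 := by linarith
  field_simp

private lemma GRP_base {c : ℝ} (h0 : 0 ≤ c) (h1 : c ≤ 1) : GRP c := by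
  have hlow : Tendsto (fun w : ℝ => (w / (w + c)) ^ (1 - c)) atTop (nhds 1) := by
    have := (tendsto_div_add_self c).rpow_const (p := 1 - c) (Or.inl one_ne_zero)
    simpa using this
  refine tendsto_of_tendsto_of_tendsto_of_le_of_le' hlow tendsto_const_nhds ?_ ?_
  · -- lower bound
    filter_upwards [eventually_gt_atTop 0] with w hw
    have hwc : 0 < w + c := by linarith
    have hG := Real.Gamma_pos_of_pos hw
    have hGc := Real.Gamma_pos_of_pos hwc
    -- Γ(w+1) ≤ Γ(w+c)^c * Γ(w+c+1)^(1-c)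
    have key : Real.Gamma (w + 1) ≤ Real.Gamma (w + c) * (w + c) ^ (1 - c) := by
      have h := gamma_mul_convex (x := w + c) (y := w + c + 1) hwc (by linarith) h0 h1
      have hc1 : c * (w + c) + (1 - c) * (w + c + 1) = w + 1 := by ring
      rw [hc1] at h
      have hG1 : Real.Gamma (w + c + 1) = (w + c) * Real.Gamma (w + c) :=
        Real.Gamma_add_one (ne_of_gt hwc)
      calc Real.Gamma (w + 1) ≤ Real.Gamma (w + c) ^ c * Real.Gamma (w + c + 1) ^ (1 - c) := h
        _ = Real.Gamma (w + c) ^ c * ((w + c) ^ (1 - c) * Real.Gamma (w + c) ^ (1 - c)) := by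
            rw [hG1, Real.mul_rpow hwc.le hGc.le]
        _ = (Real.Gamma (w + c) ^ c * Real.Gamma (w + c) ^ (1 - c)) * (w + c) ^ (1 - c) := by
            ring
        _ = Real.Gamma (w + c) * (w + c) ^ (1 - c) := by
            rw [← Real.rpow_add hGc]; norm_num
    have hkey2 : w * Real.Gamma w ≤ Real.Gamma (w + c) * (w + c) ^ (1 - c) := by
      rwa [Real.Gamma_add_one (ne_of_gt hw)] at key
    rw [le_div_iff₀ (by positivity)]
    rw [Real.div_rpow hw.le hwc.le]
    rw [div_mul_eq_mul_div, div_le_iff₀ (by positivity)]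
    calc w ^ (1 - c) * (Real.Gamma w * w ^ c)
        = (w ^ (1 - c) * w ^ c) * Real.Gamma w := by ring
      _ = w * Real.Gamma w := by rw [← Real.rpow_add hw]; norm_num
      _ ≤ Real.Gamma (w + c) * (w + c) ^ (1 - c) := hkey2
  · -- upper bound
    filter_upwards [eventually_gt_atTop 0] with w hw
    have hG := Real.Gamma_pos_of_pos hw
    have key : Real.Gamma (w + c) ≤ Real.Gamma w * w ^ c := by
      have h := gamma_mul_convex (x := w + 1) (y := w) (by linarith) hw h0 h1
      have hc1 : c * (w + 1) + (1 - c) * w = w + c := by ring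
      rw [hc1] at h
      have hG1 : Real.Gamma (w + 1) = w * Real.Gamma w := Real.Gamma_add_one (ne_of_gt hw)
      calc Real.Gamma (w + c) ≤ Real.Gamma (w + 1) ^ c * Real.Gamma w ^ (1 - c) := h
        _ = w ^ c * Real.Gamma w ^ c * Real.Gamma w ^ (1 - c) := by
            rw [hG1, Real.mul_rpow hw.le hG.le]
        _ = w ^ c * (Real.Gamma w ^ c * Real.Gamma w ^ (1 - c)) := by ring
        _ = Real.Gamma w * w ^ c := by rw [← Real.rpow_add hG]; norm_num; ring
    rw [div_le_one (by positivity)]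
    exact key

private lemma GRP_step {c : ℝ} (h : GRP c) : GRP (c + 1) := by
  have h2 := h.mul (tendsto_add_div_self c)
  rw [mul_one] at h2
  apply h2.congr'
  filter_upwards [eventually_gt_atTop (max 0 (-c))] with w hw
  have hw0 : 0 < w := lt_of_le_of_lt (le_max_left _ _) hw
  have hwc : 0 < w + c := by have := lt_of_le_of_lt (le_max_right _ _) hw; linarith
  have hG : Real.Gamma (w + (c + 1)) = (w + c) * Real.Gamma (w + c) := by
    rw [show w + (c + 1) = (w + c) + 1 by ring, Real.Gamma_add_one (ne_of_gt hwc)]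
  rw [hG, Real.rpow_add hw0 c 1, Real.rpow_one]
  have hGw := Real.Gamma_pos_of_pos hw0
  have hwc' := Real.rpow_pos_of_pos hw0 c
  field_simp

private lemma GRP_step' {c : ℝ} (h : GRP (c + 1)) : GRP c := by
  have h2 := h.mul (tendsto_div_add_self c)
  rw [mul_one] at h2
  apply h2.congr'
  filter_upwards [eventually_gt_atTop (max 0 (-c))] with w hw
  have hw0 : 0 < w := lt_of_le_of_lt (le_max_left _ _) hw
  have hwc : 0 < w + c := by have := lt_of_le_of_lt (le_max_right _ _) hw; linarith
  have hG : Real.Gamma (w + (c + 1)) = (w + c) * Real.Gamma (w + c) := by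
    rw [show w + (c + 1) = (w + c) + 1 by ring, Real.Gamma_add_one (ne_of_gt hwc)]
  rw [hG, Real.rpow_add hw0 c 1, Real.rpow_one]
  have hGw := Real.Gamma_pos_of_pos hw0
  have hwc' := Real.rpow_pos_of_pos hw0 c
  field_simp

private lemma GRP_int (m : ℤ) {c : ℝ} (h : GRP c) : GRP (c + m) := by
  induction m using Int.induction_on with
  | zero => simpa using h
  | succ n ih =>
      have := GRP_step ih
      have he : c + ((n : ℤ) + 1 : ℤ) = (c + (n : ℤ)) + 1 := by push_cast; ring
      rwa [he]
  | pred n ih =>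
      apply GRP_step' (c := c + (-(n : ℤ) - 1 : ℤ))
      have he : (c + (-(n : ℤ) - 1 : ℤ)) + 1 = c + (-(n : ℤ) : ℤ) := by push_cast; ring
      rwa [he]

private lemma GRP_all (c : ℝ) : GRP c := by
  have hb : GRP (Int.fract c) := GRP_base (Int.fract_nonneg c) (Int.fract_lt_one c).le
  have := GRP_int ⌊c⌋ hb
  rwa [Int.fract_add_floor] at this

theorem gamma_ratio_asymptotic (a b : ℝ) :
    Tendsto (fun z : ℝ => Real.Gamma (z + a) / (Real.Gamma (z + b) * z ^ (a - b)))
      atTop (nhds 1) := by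
  have h1 : GRP (a - b) := GRP_all _
  have h2 : Tendsto (fun z : ℝ =>
      Real.Gamma ((z + b) + (a - b)) / (Real.Gamma (z + b) * (z + b) ^ (a - b)))
      atTop (nhds 1) := h1.comp (tendsto_atTop_add_const_right _ b tendsto_id)
  have h3 : Tendsto (fun z : ℝ => ((z + b) / z) ^ (a - b)) atTop (nhds 1) := by
    have := (tendsto_add_div_self b).rpow_const (p := a - b) (Or.inl one_ne_zero)
    simpa using this
  have h4 := h2.mul h3
  rw [mul_one] at h4
  apply h4.congr'
  filter_upwards [eventually_gt_atTop (max 0 (-b))] with z hz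
  have hz0 : 0 < z := lt_of_le_of_lt (le_max_left _ _) hz
  have hzb : 0 < z + b := by have := lt_of_le_of_lt (le_max_right _ _) hz; linarith
  have he : z + b + (a - b) = z + a := by ring
  rw [he, Real.div_rpow hzb.le hz0.le]
  have hG := Real.Gamma_pos_of_pos hzb
  have hp1 := Real.rpow_pos_of_pos hzb (a - b)
  have hp2 := Real.rpow_pos_of_pos hz0 (a - b)
  field_simp
end

section
/- Let g : [0,∞) → [0,1] be a nondecreasing function, c-times continuously differentiable near 0, with g(0) = 0, all derivatives of order < c vanishing at 0, g^{(l)} bounded for every l ≤ c, and lim_{t→∞} g(t) = 1. Define f(ε) = (|S^{N-1}|/(2π)^{N/2}) ∫_0^∞ g(ε/r) r^{N-1} e^{-r²/2} dr for 0 < c < N. Then lim_{ε→0} f(ε)/ε^c = (2^{-c/2} Γ((N-c)/2) / Γ(N/2)) · lim_{ε→0} g(ε)/ε^c, provided the latter limit exists and is finite. -/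
open Real Filter MeasureTheory intervalIntegral

theorem cone_cylinder_limit (N c : ℕ) (hc : 0 < c) (hcN : c < N)
    (g : ℝ → ℝ) (L : ℝ)
    (hmono : MonotoneOn g (Set.Ici 0))
    (hrange : ∀ t, 0 ≤ t → g t ∈ Set.Icc (0 : ℝ) 1)
    (hg0 : g 0 = 0)
    (hsmooth : ∃ δ > 0, ContDiffOn ℝ c g (Set.Ioo (-δ) δ))
    (hderiv0 : ∀ l < c, iteratedDeriv l g 0 = 0)
    (hbdd : ∀ l ≤ c, ∃ M : ℝ, ∀ t, 0 ≤ t → |iteratedDeriv l g t| ≤ M)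
    (hginf : Tendsto g atTop (nhds 1))
    (hglim : Tendsto (fun ε => g ε / ε ^ c) (nhdsWithin 0 (Set.Ioi 0)) (nhds L)) :
    Tendsto
      (fun ε =>
        ((2 * π ^ ((N : ℝ) / 2) / Real.Gamma ((N : ℝ) / 2)) / (2 * π) ^ ((N : ℝ) / 2) *
            ∫ r in Set.Ioi (0 : ℝ), g (ε / r) * r ^ (N - 1) * Real.exp (-r ^ 2 / 2)) /
          ε ^ c)
      (nhdsWithin 0 (Set.Ioi 0))
      (nhds ((2 : ℝ) ^ (-(c : ℝ) / 2) * Real.Gamma (((N : ℝ) - c) / 2) /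
        Real.Gamma ((N : ℝ) / 2) * L)) := by
  have hNc : c ≤ N - 1 := by omega
  have hN1 : (1 : ℕ) ≤ N := by omega
  have hcast : ((N - 1 - c : ℕ) : ℝ) = (N : ℝ) - 1 - c := by
    rw [Nat.cast_sub hNc, Nat.cast_sub hN1, Nat.cast_one]
  -- Step 1: a global polynomial bound on g
  obtain ⟨M, hMpos, hM⟩ : ∃ M > 0, ∀ t : ℝ, 0 < t → g t ≤ M * t ^ c := by
    have h1 : ∀ᶠ t in nhdsWithin 0 (Set.Ioi 0), g t / t ^ c < |L| + 1 :=
      hglim.eventually_lt_const (by have := abs_nonneg L; have := le_abs_self L; linarith)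
    rw [eventually_nhdsWithin_iff] at h1
    rw [Metric.eventually_nhds_iff] at h1
    obtain ⟨δ, hδpos, hδ⟩ := h1
    refine ⟨max (|L| + 1) (1 / δ ^ c), lt_max_of_lt_left (by positivity), fun t ht => ?_⟩
    rcases lt_or_ge t δ with h | h
    · have hd : dist t 0 < δ := by
        rw [Real.dist_eq, sub_zero, abs_of_pos ht]; exact h
      have := hδ hd ht
      have htc : (0 : ℝ) < t ^ c := by positivity
      calc g t = g t / t ^ c * t ^ c := by field_simp
        _ ≤ (|L| + 1) * t ^ c := by
            apply mul_le_mul_of_nonneg_right (this.le) htc.le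
        _ ≤ max (|L| + 1) (1 / δ ^ c) * t ^ c := by
            apply mul_le_mul_of_nonneg_right (le_max_left _ _) htc.le
    · have hg1 : g t ≤ 1 := (hrange t ht.le).2
      have hδc : (0 : ℝ) < δ ^ c := by positivity
      have : (1 : ℝ) ≤ 1 / δ ^ c * t ^ c := by
        rw [div_mul_eq_mul_div, one_mul, le_div_iff₀ hδc, one_mul]
        exact pow_le_pow_left₀ hδpos.le h c
      calc g t ≤ 1 := hg1
        _ ≤ 1 / δ ^ c * t ^ c := this
        _ ≤ max (|L| + 1) (1 / δ ^ c) * t ^ c := by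
            apply mul_le_mul_of_nonneg_right (le_max_right _ _) (by positivity)
  -- Step 2: measurability of g on the nonnegative axis
  have hGmono : Monotone (fun t : ℝ => if 0 ≤ t then g t else 0) := by
    intro a b hab
    by_cases ha : 0 ≤ a
    · simp only [ha, if_pos, if_pos (ha.trans hab)]
      exact hmono ha (ha.trans hab) hab
    · simp only [ha, if_neg]
      by_cases hb : 0 ≤ b
      · simp only [hb, if_pos]; exact (hrange b hb).1
      · simp [hb]
  have hGmeas : Measurable (fun t : ℝ => if 0 ≤ t then g t else 0) := hGmono.measurable
  -- Step 3: dominated convergence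
  have key : Tendsto
      (fun ε => ∫ r in Set.Ioi (0 : ℝ), g (ε / r) * r ^ (N - 1) * Real.exp (-r ^ 2 / 2) / ε ^ c)
      (nhdsWithin 0 (Set.Ioi 0))
      (nhds (∫ r in Set.Ioi (0 : ℝ), L / r ^ c * r ^ (N - 1) * Real.exp (-r ^ 2 / 2))) := by
    apply MeasureTheory.tendsto_integral_filter_of_dominated_convergence
      (bound := fun r => M * (r ^ ((N : ℝ) - 1 - c) * Real.exp (-(1 / 2) * r ^ 2)))
    · filter_upwards [self_mem_nhdsWithin] with ε hε
      have hε' : (0 : ℝ) < ε := hε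
      have hmeas : AEStronglyMeasurable
          (fun r : ℝ => (if 0 ≤ ε / r then g (ε / r) else 0) * r ^ (N - 1) *
            Real.exp (-r ^ 2 / 2) / ε ^ c) (volume.restrict (Set.Ioi 0)) := by
        apply Measurable.aestronglyMeasurable
        exact (((hGmeas.comp (measurable_const.div measurable_id)).mul
          (measurable_id.pow_const _)).mul (by fun_prop)).div_const _
      refine hmeas.congr ?_
      filter_upwards [ae_restrict_mem measurableSet_Ioi] with r hr
      have : 0 ≤ ε / r := le_of_lt (div_pos hε' hr)
      simp [this]
    · filter_upwards [self_mem_nhdsWithin] with ε hε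
      have hε' : (0 : ℝ) < ε := hε
      filter_upwards [ae_restrict_mem measurableSet_Ioi] with r hr
      have hr' : (0 : ℝ) < r := hr
      have hgnn : 0 ≤ g (ε / r) := (hrange _ (le_of_lt (div_pos hε' hr'))).1
      have hnn : 0 ≤ g (ε / r) * r ^ (N - 1) * Real.exp (-r ^ 2 / 2) / ε ^ c := by
        apply div_nonneg _ (by positivity)
        exact mul_nonneg (mul_nonneg hgnn (by positivity)) (Real.exp_pos _).le
      rw [Real.norm_eq_abs, abs_of_nonneg hnn]
      have hb : g (ε / r) * r ^ (N - 1) * Real.exp (-r ^ 2 / 2)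
          ≤ M * (ε / r) ^ c * r ^ (N - 1) * Real.exp (-r ^ 2 / 2) := by
        apply mul_le_mul_of_nonneg_right _ (Real.exp_pos _).le
        exact mul_le_mul_of_nonneg_right (hM _ (div_pos hε' hr')) (by positivity)
      calc g (ε / r) * r ^ (N - 1) * Real.exp (-r ^ 2 / 2) / ε ^ c
          ≤ M * (ε / r) ^ c * r ^ (N - 1) * Real.exp (-r ^ 2 / 2) / ε ^ c := by
            apply div_le_div_of_nonneg_right hb (by positivity)
        _ = M * (r ^ ((N : ℝ) - 1 - c) * Real.exp (-(1 / 2) * r ^ 2)) := by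
            rw [← hcast, rpow_natCast]
            have hsplit : r ^ (N - 1) = r ^ (N - 1 - c) * r ^ c := by
              rw [← pow_add]; congr 1; omega
            rw [hsplit, div_pow]
            have : Real.exp (-r ^ 2 / 2) = Real.exp (-(1 / 2) * r ^ 2) := by ring_nf
            rw [this]
            field_simp
    · apply Integrable.const_mul
      have := integrableOn_rpow_mul_exp_neg_mul_sq (b := 1 / 2) (by norm_num)
        (s := (N : ℝ) - 1 - c) (by
          have : (c : ℝ) ≤ (N : ℝ) - 1 := by
            have : ((c : ℕ) : ℝ) ≤ ((N - 1 : ℕ) : ℝ) := Nat.cast_le.mpr hNc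
            rwa [Nat.cast_sub hN1, Nat.cast_one] at this
          linarith)
      exact this
    · filter_upwards [ae_restrict_mem measurableSet_Ioi] with r hr
      have hr' : (0 : ℝ) < r := hr
      have h1 : Tendsto (fun ε : ℝ => ε / r) (nhdsWithin 0 (Set.Ioi 0))
          (nhdsWithin 0 (Set.Ioi 0)) := by
        rw [tendsto_nhdsWithin_iff]
        constructor
        · have : Tendsto (fun ε : ℝ => ε / r) (nhds 0) (nhds (0 / r)) :=
            (continuous_id.div_const r).tendsto 0
          rw [zero_div] at this
          exact this.mono_left nhdsWithin_le_nhds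
        · filter_upwards [self_mem_nhdsWithin] with ε hε
          exact div_pos hε hr'
      have h2 := (hglim.comp h1).div_const (r ^ c)
      have h3 : Tendsto (fun ε : ℝ => g (ε / r) / ε ^ c) (nhdsWithin 0 (Set.Ioi 0))
          (nhds (L / r ^ c)) := by
        apply h2.congr'
        filter_upwards [self_mem_nhdsWithin] with ε hε
        have hε' : (0 : ℝ) < ε := hε
        show g (ε / r) / (ε / r) ^ c / r ^ c = g (ε / r) / ε ^ c
        rw [div_pow]
        field_simp
      have h4 := h3.mul_const (r ^ (N - 1) * Real.exp (-r ^ 2 / 2))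
      refine h4.congr' ?_ |>.mono_right (le_of_eq ?_)
      · filter_upwards [self_mem_nhdsWithin] with ε hε
        ring
      · congr 1; ring
  -- Step 4: value of the limit integral
  have hIval : (∫ r in Set.Ioi (0 : ℝ), L / r ^ c * r ^ (N - 1) * Real.exp (-r ^ 2 / 2))
      = L * ((1 / 2 : ℝ) ^ (-(((N : ℝ) - c)) / 2) * (1 / 2) *
          Real.Gamma (((N : ℝ) - c) / 2)) := by
    have hq : (-1 : ℝ) < (N : ℝ) - 1 - c - 1 + 1 := by
      have : ((c : ℕ) : ℝ) ≤ ((N - 1 : ℕ) : ℝ) := Nat.cast_le.mpr hNc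
      rw [Nat.cast_sub hN1, Nat.cast_one] at this
      linarith
    have hcongr : (∫ r in Set.Ioi (0 : ℝ), L / r ^ c * r ^ (N - 1) * Real.exp (-r ^ 2 / 2))
        = ∫ r in Set.Ioi (0 : ℝ),
            L * (r ^ ((N : ℝ) - 1 - c) * Real.exp (-(1 / 2) * r ^ (2 : ℝ))) := by
      apply setIntegral_congr_fun measurableSet_Ioi
      intro r hr
      have hr' : (0 : ℝ) < r := hr
      show L / r ^ c * r ^ (N - 1) * Real.exp (-r ^ 2 / 2)
          = L * (r ^ ((N : ℝ) - 1 - c) * Real.exp (-(1 / 2) * r ^ (2 : ℝ)))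
      have h2 : r ^ (2 : ℝ) = r ^ (2 : ℕ) := by
        rw [show (2 : ℝ) = ((2 : ℕ) : ℝ) by norm_num, rpow_natCast]
      rw [← hcast, rpow_natCast, h2]
      have hsplit : r ^ (N - 1) = r ^ (N - 1 - c) * r ^ c := by
        rw [← pow_add]; congr 1; omega
      rw [hsplit]
      have : Real.exp (-r ^ (2 : ℕ) / 2) = Real.exp (-(1 / 2) * r ^ (2 : ℕ)) := by ring_nf
      rw [this]
      field_simp
    rw [hcongr, MeasureTheory.integral_const_mul,
      integral_rpow_mul_exp_neg_mul_rpow (by norm_num : (0 : ℝ) < 2)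
        (by linarith : (-1 : ℝ) < (N : ℝ) - 1 - c) (by norm_num : (0 : ℝ) < 1 / 2),
      show ((N : ℝ) - 1 - c + 1) = (N : ℝ) - c from by ring]
  -- Step 5: assemble
  set C : ℝ := (2 * π ^ ((N : ℝ) / 2) / Real.Gamma ((N : ℝ) / 2)) / (2 * π) ^ ((N : ℝ) / 2)
    with hC
  have hmain := key.const_mul C
  rw [hIval] at hmain
  have hfinal : C * (L * ((1 / 2 : ℝ) ^ (-(((N : ℝ) - c)) / 2) * (1 / 2) *
      Real.Gamma (((N : ℝ) - c) / 2)))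
      = (2 : ℝ) ^ (-(c : ℝ) / 2) * Real.Gamma (((N : ℝ) - c) / 2) /
        Real.Gamma ((N : ℝ) / 2) * L := by
    have hΓN : (0 : ℝ) < Real.Gamma ((N : ℝ) / 2) := Real.Gamma_pos_of_pos (by positivity)
    have hπ : (0 : ℝ) < π ^ ((N : ℝ) / 2) := rpow_pos_of_pos pi_pos _
    have h2N : (0 : ℝ) < (2 : ℝ) ^ ((N : ℝ) / 2) := rpow_pos_of_pos two_pos _
    have h2pi : (2 * π) ^ ((N : ℝ) / 2) = (2 : ℝ) ^ ((N : ℝ) / 2) * π ^ ((N : ℝ) / 2) :=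
      mul_rpow (by norm_num) pi_pos.le
    have hhalf : (1 / 2 : ℝ) ^ (-(((N : ℝ) - c)) / 2) = (2 : ℝ) ^ (((N : ℝ) - c) / 2) := by
      rw [one_div, ← rpow_neg_one (2 : ℝ), ← rpow_mul (by norm_num : (0 : ℝ) ≤ 2)]
      congr 1; ring
    have he1 : (2 : ℝ) ^ (((N : ℝ) - c) / 2) / (2 : ℝ) ^ ((N : ℝ) / 2)
        = (2 : ℝ) ^ (-(c : ℝ) / 2) := by
      rw [← rpow_sub two_pos]; congr 1; ring
    rw [hC, h2pi, hhalf, ← he1]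
    field_simp
  rw [hfinal] at hmain
  apply hmain.congr'
  filter_upwards [self_mem_nhdsWithin] with ε hε
  rw [mul_div_assoc, MeasureTheory.integral_div]
end

section
/- The sequence a_n = ∏_{k=0}^{μ-1} (n+k)!·k!/((n-μ+k)!·(μ+k)!) satisfies a_n = Θ(n^{μ²}) as n → ∞, for each fixed μ ≥ 1; that is, there exist positive constants c, C such that c·n^{μ²} ≤ a_n ≤ C·n^{μ²} for all large n. -/
open Finset Filter

theorem degree_theta (μ : ℕ) (hμ : 1 ≤ μ) :
    ∃ c C : ℝ, 0 < c ∧ 0 < C ∧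
      ∀ᶠ n : ℕ in atTop,
        c * (n : ℝ) ^ (μ ^ 2) ≤
            (∏ k ∈ Finset.range μ,
              ((n + k).factorial * k.factorial : ℝ) /
                ((n - μ + k).factorial * (μ + k).factorial)) ∧
          (∏ k ∈ Finset.range μ,
              ((n + k).factorial * k.factorial : ℝ) /
                ((n - μ + k).factorial * (μ + k).factorial)) ≤
            C * (n : ℝ) ^ (μ ^ 2) := by
  set K : ℝ := ∏ k ∈ Finset.range μ, (k.factorial : ℝ) / (μ + k).factorial with hK
  have hKpos : 0 < K := Finset.prod_pos (fun k _ => div_pos (by positivity) (by positivity))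
  refine ⟨K / 2 ^ (μ ^ 2), K * 2 ^ (μ ^ 2), by positivity, by positivity, ?_⟩
  filter_upwards [eventually_ge_atTop (2 * μ)] with n hn
  have hμn : μ ≤ n := by omega
  have hn1 : 1 ≤ n := le_trans hμ hμn
  set m := n - μ with hm
  have hmn : m + μ = n := by omega
  have key : ∀ k ∈ Finset.range μ,
      ((n + k).factorial * k.factorial : ℝ) / ((n - μ + k).factorial * (μ + k).factorial)
      = (∏ i ∈ Finset.Ico (m + k + 1) (n + k + 1), (i : ℝ)) *
          ((k.factorial : ℝ) / (μ + k).factorial) := by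
    intro k _
    have h1 : (n + k).factorial
        = (m + k).factorial * ∏ i ∈ Finset.Ico (m + k + 1) (n + k + 1), i := by
      rw [← Finset.prod_Ico_id_eq_factorial, ← Finset.prod_Ico_id_eq_factorial,
        Finset.prod_Ico_consecutive _ (by omega : 1 ≤ m + k + 1)
          (by omega : m + k + 1 ≤ n + k + 1)]
    have h2 : n - μ + k = m + k := by omega
    have hf : ((m + k).factorial : ℝ) ≠ 0 := by positivity
    have hg : ((μ + k).factorial : ℝ) ≠ 0 := by positivity
    rw [h2, h1]
    push_cast
    field_simp
  rw [Finset.prod_congr rfl key, Finset.prod_mul_distrib, ← hK]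
  have hcard : ∀ k : ℕ, (Finset.Ico (m + k + 1) (n + k + 1)).card = μ := by
    intro k; rw [Nat.card_Ico]; omega
  have hup : ∀ k ∈ Finset.range μ,
      (∏ i ∈ Finset.Ico (m + k + 1) (n + k + 1), (i : ℝ)) ≤ (2 * (n : ℝ)) ^ μ := by
    intro k hk
    rw [← hcard k, ← Finset.prod_const]
    refine Finset.prod_le_prod (fun i _ => by positivity) (fun i hi => ?_)
    rw [Finset.mem_Ico] at hi
    have hk' : k < μ := Finset.mem_range.mp hk
    have : (i : ℝ) ≤ 2 * n := by
      have : i ≤ 2 * n := by omega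
      exact_mod_cast this
    exact this
  have hlo : ∀ k ∈ Finset.range μ,
      ((n : ℝ) / 2) ^ μ ≤ ∏ i ∈ Finset.Ico (m + k + 1) (n + k + 1), (i : ℝ) := by
    intro k hk
    rw [← hcard k, ← Finset.prod_const]
    refine Finset.prod_le_prod (fun i _ => by positivity) (fun i hi => ?_)
    rw [Finset.mem_Ico] at hi
    have h2n : (n : ℝ) ≤ 2 * i := by
      have : n ≤ 2 * i := by omega
      exact_mod_cast this
    linarith
  have hP_up : (∏ k ∈ Finset.range μ, ∏ i ∈ Finset.Ico (m + k + 1) (n + k + 1), (i : ℝ))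
      ≤ (2 * (n : ℝ)) ^ (μ ^ 2) := by
    calc (∏ k ∈ Finset.range μ, ∏ i ∈ Finset.Ico (m + k + 1) (n + k + 1), (i : ℝ))
        ≤ ∏ _k ∈ Finset.range μ, (2 * (n : ℝ)) ^ μ :=
          Finset.prod_le_prod (fun k _ => Finset.prod_nonneg (fun i _ => by positivity)) hup
      _ = (2 * (n : ℝ)) ^ (μ ^ 2) := by
          rw [Finset.prod_const, Finset.card_range, ← pow_mul, pow_two]
  have hP_lo : ((n : ℝ) / 2) ^ (μ ^ 2)
      ≤ ∏ k ∈ Finset.range μ, ∏ i ∈ Finset.Ico (m + k + 1) (n + k + 1), (i : ℝ) := by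
    calc ((n : ℝ) / 2) ^ (μ ^ 2)
        = ∏ _k ∈ Finset.range μ, ((n : ℝ) / 2) ^ μ := by
          rw [Finset.prod_const, Finset.card_range, ← pow_mul, pow_two]
      _ ≤ _ := Finset.prod_le_prod (fun k _ => by positivity) hlo
  constructor
  · have : K / 2 ^ (μ ^ 2) * (n : ℝ) ^ (μ ^ 2) = ((n : ℝ) / 2) ^ (μ ^ 2) * K := by
      rw [div_pow]; ring
    rw [this]
    exact mul_le_mul_of_nonneg_right hP_lo hKpos.le
  · have : K * 2 ^ (μ ^ 2) * (n : ℝ) ^ (μ ^ 2) = (2 * (n : ℝ)) ^ (μ ^ 2) * K := by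
      rw [mul_pow]; ring
    rw [this]
    exact mul_le_mul_of_nonneg_right hP_up hKpos.le
end

section
/- For each fixed μ ≥ 1, the quantity C(n,μ) · (∏_{j=1}^{n-μ} Γ(j/2+1)Γ(j/2+μ)) / (∏_{j=1}^{n} Γ(j/2)Γ(j/2+1)) grows like Θ(n^{μ²/2}) as n → ∞, where C(n,μ) is the binomial coefficient. -/
open Finset Filter Real

private lemma prod_Ioc_shift (G : ℕ → ℝ) (c m : ℕ) :
    ∏ j ∈ Finset.Ioc 0 m, G (j + c) = ∏ j ∈ Finset.Ioc c (m + c), G j := by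
  have : Finset.Ioc c (m + c) = (Finset.Ioc 0 m).map (addRightEmbedding c) := by
    rw [Finset.map_add_right_Ioc]; simp
  rw [this, Finset.prod_map]
  simp [addRightEmbedding]

private lemma claimE (G : ℕ → ℝ) (m μ : ℕ) :
    (∏ j ∈ Finset.Icc 1 m, G (j + 2) * G (j + 2 * μ)) * (∏ j ∈ Finset.Icc 1 (2 * μ), G j) *
        ∏ k ∈ Finset.Icc 1 μ, G (m + 2 + k) =
      (∏ j ∈ Finset.Icc 1 (m + μ), G j * G (j + 2)) * ∏ k ∈ Finset.Icc 1 μ, G (m + μ + k) := by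
  have hIcc : ∀ a : ℕ, Finset.Icc 1 a = Finset.Ioc 0 a := fun a => by
    exact Finset.Icc_add_one_left_eq_Ioc 0 a
  simp only [hIcc, Finset.prod_mul_distrib]
  have h1 : ∏ k ∈ Finset.Ioc 0 μ, G (m + 2 + k) = ∏ j ∈ Finset.Ioc (m+2) (μ + (m+2)), G j := by
    rw [← prod_Ioc_shift]; apply Finset.prod_congr rfl; intro j _; congr 1; omega
  have h2 : ∏ k ∈ Finset.Ioc 0 μ, G (m + μ + k) = ∏ j ∈ Finset.Ioc (m+μ) (μ + (m+μ)), G j := by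
    rw [← prod_Ioc_shift]; apply Finset.prod_congr rfl; intro j _; congr 1; omega
  rw [h1, h2, prod_Ioc_shift, prod_Ioc_shift, prod_Ioc_shift]
  have e1 : (∏ j ∈ Finset.Ioc 2 (m+2), G j) * (∏ j ∈ Finset.Ioc (m+2) (μ+(m+2)), G j)
      = ∏ j ∈ Finset.Ioc 2 (μ+(m+2)), G j := Finset.prod_Ioc_consecutive _ (by omega) (by omega)
  have e2 : (∏ j ∈ Finset.Ioc 0 (2*μ), G j) * (∏ j ∈ Finset.Ioc (2*μ) (m+2*μ), G j)
      = ∏ j ∈ Finset.Ioc 0 (m+2*μ), G j := Finset.prod_Ioc_consecutive _ (by omega) (by omega)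
  have e3 : (∏ j ∈ Finset.Ioc 0 (m+μ), G j) * (∏ j ∈ Finset.Ioc (m+μ) (μ+(m+μ)), G j)
      = ∏ j ∈ Finset.Ioc 0 (μ+(m+μ)), G j := Finset.prod_Ioc_consecutive _ (by omega) (by omega)
  have h3 : (m + μ) + 2 = μ + (m + 2) := by omega
  have h4 : m + 2*μ = μ + (m + μ) := by omega
  calc (∏ j ∈ Finset.Ioc 2 (m+2), G j) * (∏ j ∈ Finset.Ioc (2*μ) (m+2*μ), G j) *
        (∏ j ∈ Finset.Ioc 0 (2*μ), G j) * (∏ j ∈ Finset.Ioc (m+2) (μ+(m+2)), G j)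
      = ((∏ j ∈ Finset.Ioc 2 (m+2), G j) * (∏ j ∈ Finset.Ioc (m+2) (μ+(m+2)), G j)) *
        ((∏ j ∈ Finset.Ioc 0 (2*μ), G j) * (∏ j ∈ Finset.Ioc (2*μ) (m+2*μ), G j)) := by ring
    _ = (∏ j ∈ Finset.Ioc 2 (μ+(m+2)), G j) * (∏ j ∈ Finset.Ioc 0 (m+2*μ), G j) := by
        rw [e1, e2]
    _ = (∏ j ∈ Finset.Ioc 0 (m+μ), G j) * (∏ j ∈ Finset.Ioc 2 ((m+μ)+2), G j) *
        (∏ j ∈ Finset.Ioc (m+μ) (μ+(m+μ)), G j) := by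
        rw [h3, h4, ← e3]; ring

private lemma Gamma_midpoint_sq_le {x y : ℝ} (hx : 0 < x) (hy : 0 < y) :
    Real.Gamma ((x + y) / 2) ^ 2 ≤ Real.Gamma x * Real.Gamma y := by
  have h := Real.convexOn_log_Gamma.2 (Set.mem_Ioi.2 hx) (Set.mem_Ioi.2 hy)
    (by norm_num : (0:ℝ) ≤ 1/2) (by norm_num : (0:ℝ) ≤ 1/2) (by norm_num)
  simp only [Function.comp_apply, smul_eq_mul] at h
  have hxy : (1/2 : ℝ) * x + (1/2 : ℝ) * y = (x + y) / 2 := by ring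
  rw [hxy] at h
  have hm : 0 < (x + y) / 2 := by linarith
  have hG := Real.Gamma_pos_of_pos hm
  have hGx := Real.Gamma_pos_of_pos hx
  have hGy := Real.Gamma_pos_of_pos hy
  rw [← Real.log_le_log_iff (by positivity) (by positivity), Real.log_pow, Real.log_mul hGx.ne' hGy.ne']
  push_cast
  linarith

private lemma half_upper {x : ℝ} (hx : 1 ≤ x) :
    Real.Gamma (x + 1/2) ≤ Real.Gamma x * Real.sqrt x := by
  have hx0 : 0 < x := by linarith
  have h := Gamma_midpoint_sq_le hx0 (by linarith : (0:ℝ) < x + 1)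
  rw [Real.Gamma_add_one hx0.ne'] at h
  have hxy : (x + (x + 1)) / 2 = x + 1/2 := by ring
  rw [hxy] at h
  have h2 : Real.Gamma (x + 1/2) ^ 2 ≤ (Real.Gamma x * Real.sqrt x) ^ 2 := by
    have : (Real.Gamma x * Real.sqrt x) ^ 2 = Real.Gamma x * (x * Real.Gamma x) := by
      rw [mul_pow, Real.sq_sqrt hx0.le]; ring
    linarith
  have hG := Real.Gamma_pos_of_pos (by linarith : (0:ℝ) < x + 1/2)
  calc Real.Gamma (x + 1/2) = Real.sqrt (Real.Gamma (x + 1/2) ^ 2) := (Real.sqrt_sq hG.le).symm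
    _ ≤ Real.sqrt ((Real.Gamma x * Real.sqrt x) ^ 2) := Real.sqrt_le_sqrt h2
    _ = Real.Gamma x * Real.sqrt x := Real.sqrt_sq (by positivity)

private lemma half_lower {x : ℝ} (hx : 1 ≤ x) :
    Real.Gamma x * Real.sqrt (x / 2) ≤ Real.Gamma (x + 1/2) := by
  have hx0 : 0 < x := by linarith
  have h := Gamma_midpoint_sq_le (by linarith : (0:ℝ) < x + 1/2) (by linarith : (0:ℝ) < x + 3/2)
  have e1 : ((x + 1/2) + (x + 3/2)) / 2 = x + 1 := by ring
  have e2 : (x : ℝ) + 3/2 = (x + 1/2) + 1 := by ring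
  rw [e1, e2, Real.Gamma_add_one (by linarith : (x:ℝ) + 1/2 ≠ 0), Real.Gamma_add_one hx0.ne'] at h
  -- h : (x * Γ x)^2 ≤ Γ(x+1/2) * ((x+1/2) * Γ(x+1/2))
  have hGh := Real.Gamma_pos_of_pos (by linarith : (0:ℝ) < x + 1/2)
  have hGx := Real.Gamma_pos_of_pos hx0
  have key : (Real.Gamma x * Real.sqrt (x/2)) ^ 2 ≤ Real.Gamma (x + 1/2) ^ 2 := by
    have hs : Real.sqrt (x/2) ^ 2 = x / 2 := Real.sq_sqrt (by linarith)
    have h1 : (x * Real.Gamma x)^2 ≤ (x + 1/2) * Real.Gamma (x+1/2)^2 := by nlinarith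
    have h2 : (x/2) * (x + 1/2) ≤ x^2 := by nlinarith
    rw [mul_pow, hs]
    nlinarith [sq_nonneg (Real.Gamma x), sq_nonneg (Real.Gamma (x+1/2))]
  calc Real.Gamma x * Real.sqrt (x/2) = Real.sqrt ((Real.Gamma x * Real.sqrt (x/2)) ^ 2) :=
      (Real.sqrt_sq (by positivity)).symm
    _ ≤ Real.sqrt (Real.Gamma (x + 1/2) ^ 2) := Real.sqrt_le_sqrt key
    _ = Real.Gamma (x + 1/2) := Real.sqrt_sq hGh.le

private lemma gamma_ratio_bounds (d : ℕ) {x : ℝ} (hx : 1 ≤ x) :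
    Real.Gamma x * (x / 2) ^ ((d : ℝ) / 2) ≤ Real.Gamma (x + (d : ℝ) / 2) ∧
      Real.Gamma (x + (d : ℝ) / 2) ≤ Real.Gamma x * (x + (d : ℝ)) ^ ((d : ℝ) / 2) := by
  have hx0 : 0 < x := by linarith
  have hGx := Real.Gamma_pos_of_pos hx0
  induction d with
  | zero => simp
  | succ d ih =>
    obtain ⟨ihl, ihu⟩ := ih
    have hd2 : (0:ℝ) ≤ (d : ℝ) / 2 := by positivity
    set y := x + (d : ℝ) / 2 with hy_def
    have hy : (1:ℝ) ≤ y := by rw [hy_def]; linarith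
    have hy0 : (0:ℝ) < y := by rw [hy_def]; linarith
    have hGy := Real.Gamma_pos_of_pos hy0
    have hcast : x + ((d + 1 : ℕ) : ℝ) / 2 = y + 1/2 := by rw [hy_def]; push_cast; ring
    constructor
    · rw [hcast]
      have hexp : (x/2) ^ (((d + 1 : ℕ) : ℝ) / 2) = (x/2) ^ ((d:ℝ)/2) * Real.sqrt (x/2) := by
        rw [Real.sqrt_eq_rpow, ← Real.rpow_add (by positivity)]
        congr 1; push_cast; ring
      rw [hexp]
      calc Real.Gamma x * ((x/2) ^ ((d:ℝ)/2) * Real.sqrt (x/2))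
          = (Real.Gamma x * (x/2) ^ ((d:ℝ)/2)) * Real.sqrt (x/2) := by ring
        _ ≤ Real.Gamma y * Real.sqrt (y/2) := by
            apply mul_le_mul ihl (Real.sqrt_le_sqrt (by rw [hy_def]; linarith)) (Real.sqrt_nonneg _) hGy.le
        _ ≤ Real.Gamma (y + 1/2) := half_lower hy
    · rw [hcast]
      have hexp : (x + ((d + 1 : ℕ) : ℝ)) ^ (((d + 1 : ℕ) : ℝ) / 2)
          = (x + (d:ℝ) + 1) ^ ((d:ℝ)/2) * Real.sqrt (x + (d:ℝ) + 1) := by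
        rw [Real.sqrt_eq_rpow, ← Real.rpow_add (by positivity)]
        push_cast; congr 1 <;> ring
      rw [hexp]
      calc Real.Gamma (y + 1/2) ≤ Real.Gamma y * Real.sqrt y := half_upper hy
        _ ≤ (Real.Gamma x * (x + (d:ℝ)) ^ ((d:ℝ)/2)) * Real.sqrt (x + (d:ℝ) + 1) := by
            apply mul_le_mul ihu (Real.sqrt_le_sqrt (by rw [hy_def]; linarith))
              (Real.sqrt_nonneg _) (by positivity)
        _ = Real.Gamma x * ((x + (d:ℝ)) ^ ((d:ℝ)/2) * Real.sqrt (x + (d:ℝ) + 1)) := by ring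
        _ ≤ Real.Gamma x * ((x + (d:ℝ) + 1) ^ ((d:ℝ)/2) * Real.sqrt (x + (d:ℝ) + 1)) := by
            apply mul_le_mul_of_nonneg_left ?_ hGx.le
            apply mul_le_mul_of_nonneg_right ?_ (Real.sqrt_nonneg _)
            exact Real.rpow_le_rpow (by positivity) (by linarith) hd2

private lemma factor_bounds {μ m k : ℕ} (hμ : 1 ≤ μ) (hm : μ + 2 ≤ m) (hk1 : 1 ≤ k)
    (hkμ : k ≤ μ) :
    (8:ℝ) ^ (-((μ:ℝ)/2)) * ((m + μ : ℕ) : ℝ) ^ ((μ:ℝ)/2 - 1) ≤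
      Real.Gamma (((m + μ + k : ℕ) : ℝ)/2) / Real.Gamma (((m + 2 + k : ℕ) : ℝ)/2) ∧
    Real.Gamma (((m + μ + k : ℕ) : ℝ)/2) / Real.Gamma (((m + 2 + k : ℕ) : ℝ)/2) ≤
      4 * ((m + μ : ℕ) : ℝ) ^ ((μ:ℝ)/2 - 1) := by
  set U : ℝ := (μ : ℝ) with hU_def
  set z : ℝ := ((m : ℝ) + (k : ℝ)) / 2 with hz_def
  set ν : ℝ := ((m + μ : ℕ) : ℝ) with hν_def
  have hUm : U ≤ (m : ℝ) := by rw [hU_def]; exact_mod_cast by omega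
  have hU1 : (1:ℝ) ≤ U := by rw [hU_def]; exact_mod_cast hμ
  have hk1' : (1:ℝ) ≤ (k:ℝ) := by exact_mod_cast hk1
  have hkμ' : (k:ℝ) ≤ U := by rw [hU_def]; exact_mod_cast hkμ
  have hm3 : (3:ℝ) ≤ (m:ℝ) := by exact_mod_cast by omega
  have hz1 : (1:ℝ) ≤ z := by rw [hz_def]; linarith
  have hz0 : (0:ℝ) < z := by linarith
  have hνz : ν = (m:ℝ) + U := by rw [hν_def, hU_def]; push_cast; ring
  have hν0 : (0:ℝ) < ν := by rw [hνz]; linarith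
  have hzlow : ν/4 ≤ z := by rw [hνz, hz_def]; linarith
  have hzup : z ≤ ν/2 := by rw [hνz, hz_def]; linarith
  have hzU : z + U ≤ ν := by rw [hνz, hz_def]; linarith
  have e1 : ((m + μ + k : ℕ) : ℝ)/2 = z + U/2 := by rw [hz_def, hU_def]; push_cast; ring
  have e2 : ((m + 2 + k : ℕ) : ℝ)/2 = z + 1 := by rw [hz_def]; push_cast; ring
  rw [e1, e2, Real.Gamma_add_one hz0.ne']
  have hGz := Real.Gamma_pos_of_pos hz0
  have hGzU := Real.Gamma_pos_of_pos (by linarith : (0:ℝ) < z + U/2)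
  obtain ⟨gl, gu⟩ := gamma_ratio_bounds μ hz1
  rw [← hU_def] at gl gu
  constructor
  · have c1 : (8:ℝ) ^ (-(U/2)) * ν ^ (U/2 - 1) = (ν/8) ^ (U/2) / ν := by
      rw [Real.div_rpow hν0.le (by norm_num), Real.rpow_neg (by norm_num),
        Real.rpow_sub hν0, Real.rpow_one]
      ring
    rw [c1]
    calc (ν/8) ^ (U/2) / ν ≤ (z/2) ^ (U/2) / z := by
          apply div_le_div₀ (by positivity) ?_ hz0 (by linarith)
          exact Real.rpow_le_rpow (by positivity) (by linarith) (by positivity)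
      _ = Real.Gamma z * (z/2) ^ (U/2) / (z * Real.Gamma z) := by
          rw [mul_comm z (Real.Gamma z), mul_div_mul_left _ _ hGz.ne']
      _ ≤ Real.Gamma (z + U/2) / (z * Real.Gamma z) := by gcongr
  · calc Real.Gamma (z + U/2) / (z * Real.Gamma z)
        ≤ Real.Gamma z * (z + U) ^ (U/2) / (z * Real.Gamma z) := by gcongr
      _ = (z + U) ^ (U/2) / z := by
          rw [mul_comm z (Real.Gamma z), mul_div_mul_left _ _ hGz.ne']
      _ ≤ ν ^ (U/2) / (ν/4) := by
          apply div_le_div₀ (by positivity) ?_ (by linarith) hzlow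
          exact Real.rpow_le_rpow (by positivity) hzU (by positivity)
      _ = 4 * ν ^ (U/2 - 1) := by
          rw [Real.rpow_sub hν0, Real.rpow_one]
          field_simp

theorem real_volume_theta (μ : ℕ) (hμ : 1 ≤ μ) :
    ∃ c C : ℝ, 0 < c ∧ 0 < C ∧
      ∀ᶠ n : ℕ in atTop,
        c * (n : ℝ) ^ (((μ ^ 2 : ℕ) : ℝ) / 2) ≤
            (n.choose μ : ℝ) *
              (∏ j ∈ Finset.Icc 1 (n - μ),
                Real.Gamma ((j : ℝ) / 2 + 1) * Real.Gamma ((j : ℝ) / 2 + μ)) /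
              (∏ j ∈ Finset.Icc 1 n,
                Real.Gamma ((j : ℝ) / 2) * Real.Gamma ((j : ℝ) / 2 + 1)) ∧
          (n.choose μ : ℝ) *
              (∏ j ∈ Finset.Icc 1 (n - μ),
                Real.Gamma ((j : ℝ) / 2 + 1) * Real.Gamma ((j : ℝ) / 2 + μ)) /
              (∏ j ∈ Finset.Icc 1 n,
                Real.Gamma ((j : ℝ) / 2) * Real.Gamma ((j : ℝ) / 2 + 1)) ≤
            C * (n : ℝ) ^ (((μ ^ 2 : ℕ) : ℝ) / 2) := by
  have hGpos : ∀ j : ℕ, 1 ≤ j → (0:ℝ) < Real.Gamma ((j:ℝ)/2) := by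
    intro j hj
    apply Real.Gamma_pos_of_pos
    have h1 : (1:ℝ) ≤ (j:ℝ) := by exact_mod_cast hj
    linarith
  set K : ℝ := ∏ j ∈ Finset.Icc 1 (2*μ), Real.Gamma ((j:ℝ)/2) with hK_def
  have hK : 0 < K := Finset.prod_pos fun j hj => hGpos j (Finset.mem_Icc.mp hj).1
  refine ⟨(8:ℝ) ^ (-((μ:ℝ)/2) * μ) / ((2:ℝ)^μ * (Nat.factorial μ : ℝ) * K),
    (4:ℝ)^μ / K, by positivity, by positivity, ?_⟩
  filter_upwards [eventually_ge_atTop (2*μ + 2)] with n hn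
  obtain ⟨m, rfl⟩ : ∃ m, n = m + μ := ⟨n - μ, by omega⟩
  have hm : μ + 2 ≤ m := by omega
  simp only [Nat.add_sub_cancel]
  set ν : ℝ := ((m + μ : ℕ) : ℝ) with hν_def
  have hν0 : (0:ℝ) < ν := by rw [hν_def]; exact_mod_cast by omega
  set G : ℕ → ℝ := fun j => Real.Gamma ((j:ℝ)/2) with hG_def
  set P1 : ℝ := ∏ k ∈ Finset.Icc 1 μ, G (m + μ + k) with hP1_def
  set P2 : ℝ := ∏ k ∈ Finset.Icc 1 μ, G (m + 2 + k) with hP2_def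
  have hP1 : 0 < P1 := Finset.prod_pos fun k _ => hGpos _ (by omega)
  have hP2 : 0 < P2 := Finset.prod_pos fun k _ => hGpos _ (by omega)
  have hA : (∏ j ∈ Finset.Icc 1 m,
        Real.Gamma ((j : ℝ) / 2 + 1) * Real.Gamma ((j : ℝ) / 2 + μ))
      = ∏ j ∈ Finset.Icc 1 m, G (j + 2) * G (j + 2 * μ) := by
    refine Finset.prod_congr rfl fun j _ => ?_
    rw [hG_def]
    congr 2 <;> push_cast <;> ring
  have hB : (∏ j ∈ Finset.Icc 1 (m + μ),
        Real.Gamma ((j : ℝ) / 2) * Real.Gamma ((j : ℝ) / 2 + 1))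
      = ∏ j ∈ Finset.Icc 1 (m + μ), G j * G (j + 2) := by
    refine Finset.prod_congr rfl fun j _ => ?_
    rw [hG_def]
    congr 2 <;> push_cast <;> ring
  have hBpos : 0 < ∏ j ∈ Finset.Icc 1 (m + μ), G j * G (j + 2) :=
    Finset.prod_pos fun j hj =>
      mul_pos (hGpos j (Finset.mem_Icc.mp hj).1) (hGpos (j+2) (by omega))
  have hE := claimE G m μ
  rw [← hK_def, ← hP1_def, ← hP2_def] at hE
  have hAB : (∏ j ∈ Finset.Icc 1 m, G (j + 2) * G (j + 2 * μ)) /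
      (∏ j ∈ Finset.Icc 1 (m + μ), G j * G (j + 2)) = P1 / (K * P2) := by
    rw [div_eq_div_iff hBpos.ne' (by positivity)]
    linear_combination hE
  -- ratio product bounds
  have hQ : P1 / P2 = ∏ k ∈ Finset.Icc 1 μ, G (m + μ + k) / G (m + 2 + k) := by
    rw [hP1_def, hP2_def, Finset.prod_div_distrib]
  have hcard : (Finset.Icc 1 μ).card = μ := by rw [Nat.card_Icc]; omega
  have hQl : ((8:ℝ) ^ (-((μ:ℝ)/2)) * ν ^ ((μ:ℝ)/2 - 1)) ^ μ ≤ P1 / P2 := by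
    rw [hQ]
    calc ((8:ℝ) ^ (-((μ:ℝ)/2)) * ν ^ ((μ:ℝ)/2 - 1)) ^ μ
        = ∏ _k ∈ Finset.Icc 1 μ, ((8:ℝ) ^ (-((μ:ℝ)/2)) * ν ^ ((μ:ℝ)/2 - 1)) := by
          rw [Finset.prod_const, hcard]
      _ ≤ ∏ k ∈ Finset.Icc 1 μ, G (m + μ + k) / G (m + 2 + k) := by
          refine Finset.prod_le_prod (fun k _ => by positivity) fun k hk => ?_
          exact (factor_bounds hμ hm (Finset.mem_Icc.mp hk).1 (Finset.mem_Icc.mp hk).2).1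
  have hQu : P1 / P2 ≤ (4 * ν ^ ((μ:ℝ)/2 - 1)) ^ μ := by
    rw [hQ]
    calc ∏ k ∈ Finset.Icc 1 μ, G (m + μ + k) / G (m + 2 + k)
        ≤ ∏ _k ∈ Finset.Icc 1 μ, (4 * ν ^ ((μ:ℝ)/2 - 1)) := by
          refine Finset.prod_le_prod (fun k _ => by positivity) fun k hk => ?_
          exact (factor_bounds hμ hm (Finset.mem_Icc.mp hk).1 (Finset.mem_Icc.mp hk).2).2
      _ = (4 * ν ^ ((μ:ℝ)/2 - 1)) ^ μ := by rw [Finset.prod_const, hcard]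
  -- choose bounds
  have hcu : (((m + μ).choose μ : ℕ) : ℝ) ≤ ν ^ μ := by
    rw [hν_def]
    have h1 : (m + μ).choose μ ≤ (m + μ) ^ μ :=
      calc (m + μ).choose μ ≤ (Nat.factorial μ) * (m + μ).choose μ :=
            Nat.le_mul_of_pos_left _ (Nat.factorial_pos μ)
        _ = (m + μ).descFactorial μ := by rw [Nat.descFactorial_eq_factorial_mul_choose]
        _ ≤ (m + μ) ^ μ := Nat.descFactorial_le_pow _ _
    exact_mod_cast h1
  have hcl : (ν/2) ^ μ / (Nat.factorial μ : ℝ) ≤ (((m + μ).choose μ : ℕ) : ℝ) := by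
    have h1 : (m + 1) ^ μ ≤ (Nat.factorial μ) * (m + μ).choose μ := by
      have h := Nat.pow_sub_le_descFactorial (m + μ) μ
      rw [Nat.descFactorial_eq_factorial_mul_choose] at h
      have e : m + μ + 1 - μ = m + 1 := by omega
      rwa [e] at h
    have h1' : (((m + 1 : ℕ) : ℝ)) ^ μ ≤ (Nat.factorial μ : ℝ) * ((m + μ).choose μ : ℝ) := by
      exact_mod_cast h1
    have h2 : (ν/2) ^ μ ≤ (((m + 1 : ℕ) : ℝ)) ^ μ := by
      apply pow_le_pow_left₀ (by positivity)
      rw [hν_def]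
      push_cast
      have : (μ:ℝ) ≤ (m:ℝ) + 2 := by exact_mod_cast by omega
      linarith
    rw [div_le_iff₀ (by positivity)]
    calc (ν/2) ^ μ ≤ (((m + 1 : ℕ) : ℝ)) ^ μ := h2
      _ ≤ (Nat.factorial μ : ℝ) * ((m + μ).choose μ : ℝ) := h1'
      _ = ((m + μ).choose μ : ℝ) * (Nat.factorial μ : ℝ) := by ring
  -- exponent algebra
  have hb8 : ((8:ℝ) ^ (-((μ:ℝ)/2))) ^ μ = (8:ℝ) ^ (-((μ:ℝ)/2) * μ) := by
    rw [← Real.rpow_natCast ((8:ℝ) ^ (-((μ:ℝ)/2))) μ, ← Real.rpow_mul (by norm_num)]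
  have hbν : (ν ^ ((μ:ℝ)/2 - 1)) ^ μ = ν ^ (((μ:ℝ)/2 - 1) * μ) := by
    rw [← Real.rpow_natCast (ν ^ ((μ:ℝ)/2 - 1)) μ, ← Real.rpow_mul hν0.le]
  have hνE : ν ^ ((μ:ℝ)) * ν ^ (((μ:ℝ)/2 - 1) * μ) = ν ^ (((μ ^ 2 : ℕ) : ℝ) / 2) := by
    rw [← Real.rpow_add hν0]
    congr 1
    push_cast
    ring
  have hchoose_nonneg : (0:ℝ) ≤ (((m + μ).choose μ : ℕ) : ℝ) := by positivity
  refine ⟨?_, ?_⟩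
  · rw [hA, hB, mul_div_assoc, hAB]
    have hmain : (ν/2) ^ μ / (Nat.factorial μ : ℝ) *
        ((8:ℝ) ^ (-((μ:ℝ)/2)) * ν ^ ((μ:ℝ)/2 - 1)) ^ μ ≤
        (((m + μ).choose μ : ℕ) : ℝ) * (P1 / (K * P2)) * K := by
      have : (((m + μ).choose μ : ℕ) : ℝ) * (P1 / (K * P2)) * K
          = (((m + μ).choose μ : ℕ) : ℝ) * (P1 / P2) := by
        field_simp
      rw [this]
      exact mul_le_mul hcl hQl (by positivity) hchoose_nonneg
    have heq : (8:ℝ) ^ (-((μ:ℝ)/2) * μ) / ((2:ℝ)^μ * (Nat.factorial μ : ℝ) * K) *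
        ν ^ (((μ ^ 2 : ℕ) : ℝ) / 2)
        = (ν/2) ^ μ / (Nat.factorial μ : ℝ) *
          ((8:ℝ) ^ (-((μ:ℝ)/2)) * ν ^ ((μ:ℝ)/2 - 1)) ^ μ / K := by
      rw [mul_pow, hb8, hbν, div_pow, ← hνE, ← Real.rpow_natCast ν μ]
      field_simp
    rw [heq, div_le_iff₀ hK]
    exact hmain
  · rw [hA, hB, mul_div_assoc, hAB]
    have hmain : (((m + μ).choose μ : ℕ) : ℝ) * (P1 / (K * P2)) * K ≤
        ν ^ μ * (4 * ν ^ ((μ:ℝ)/2 - 1)) ^ μ := by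
      have : (((m + μ).choose μ : ℕ) : ℝ) * (P1 / (K * P2)) * K
          = (((m + μ).choose μ : ℕ) : ℝ) * (P1 / P2) := by
        field_simp
      rw [this]
      exact mul_le_mul hcu hQu (by positivity) (by positivity)
    have hequ : ν ^ μ * (4 * ν ^ ((μ:ℝ)/2 - 1)) ^ μ / K
        = (4:ℝ)^μ / K * ν ^ (((μ ^ 2 : ℕ) : ℝ) / 2) := by
      rw [mul_pow, hbν, ← Real.rpow_natCast ν μ, ← hνE]
      ring
    rw [← hequ, le_div_iff₀ hK]
    exact hmain
end

section
/- Let n, μ ≥ 1 with n - μ = 2m + 1 odd and μ fixed. Then C(n,μ) · (∏_{i=0}^{m-1} Γ(i+μ+3/2)/Γ(i+3/2)) / (∏_{k=n-μ+1}^{n} Γ(1+k/2)) = Θ(n^{μ(μ+1)/4}) as n → ∞ along integers with n - μ odd. -/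
open Finset Filter Real

namespace SymVolAux

lemma gamma_interp {x : ℝ} (hx : 0 < x) :
    Real.Gamma (x + 1/2) ≤ Real.Gamma x * x ^ (1/2:ℝ) := by
  have hG := Real.Gamma_pos_of_pos hx
  have h := Real.Gamma_mul_add_mul_le_rpow_Gamma_mul_rpow_Gamma hx
    (by linarith : (0:ℝ) < x + 1) one_half_pos one_half_pos (by norm_num)
  have e1 : (1/2:ℝ) * x + (1/2:ℝ) * (x+1) = x + 1/2 := by ring
  rw [e1, Real.Gamma_add_one (ne_of_gt hx)] at h
  calc Real.Gamma (x+1/2) ≤ Real.Gamma x ^ (1/2:ℝ) * (x * Real.Gamma x) ^ (1/2:ℝ) := h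
    _ = Real.Gamma x * x ^ (1/2:ℝ) := by
        rw [Real.mul_rpow hx.le hG.le,
          show Real.Gamma x ^ (1/2:ℝ) * (x ^ (1/2:ℝ) * Real.Gamma x ^ (1/2:ℝ))
            = (Real.Gamma x ^ (1/2:ℝ) * Real.Gamma x ^ (1/2:ℝ)) * x ^ (1/2:ℝ) from by ring,
          ← Real.rpow_add hG]
        norm_num

lemma gamma_interp_lower {x : ℝ} (hx : 0 < x) :
    x * Real.Gamma x ≤ Real.Gamma (x + 1/2) * (x + 1/2) ^ (1/2:ℝ) := by
  have hx2 : (0:ℝ) < x + 1/2 := by linarith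
  have h := gamma_interp hx2
  rw [show x + 1/2 + 1/2 = x + 1 from by ring,
    Real.Gamma_add_one (ne_of_gt hx)] at h
  linarith [h]

lemma four_rpow_half : ((4:ℝ)) ^ (1/2:ℝ) = 2 := by
  rw [show (4:ℝ) = 2^(2:ℕ) from by norm_num, ← Real.rpow_natCast 2 2,
    ← Real.rpow_mul (by norm_num)]
  norm_num

lemma wendel_low {x : ℝ} (hx : 1 ≤ x) :
    x ^ (1/2:ℝ) / 2 * Real.Gamma x ≤ Real.Gamma (x + 1/2) := by
  have hx0 : (0:ℝ) < x := lt_of_lt_of_le one_pos hx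
  have hG := Real.Gamma_pos_of_pos hx0
  have hG2 := Real.Gamma_pos_of_pos (show (0:ℝ) < x + 1/2 by linarith)
  have h := gamma_interp_lower hx0
  have hs0 : (0:ℝ) < x ^ (1/2:ℝ) := Real.rpow_pos_of_pos hx0 _
  have h2 : (x + 1/2) ^ (1/2:ℝ) ≤ 2 * x ^ (1/2:ℝ) := by
    calc (x+1/2)^(1/2:ℝ) ≤ (4*x)^(1/2:ℝ) :=
          Real.rpow_le_rpow (by linarith) (by linarith) (by norm_num)
      _ = 2 * x^(1/2:ℝ) := by
          rw [Real.mul_rpow (by norm_num) hx0.le, four_rpow_half]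
  have hss : x ^ (1/2:ℝ) * x ^ (1/2:ℝ) = x := by
    rw [← Real.rpow_add hx0]; norm_num
  nlinarith [mul_le_mul_of_nonneg_left h2 hG2.le]

lemma wendel_up {x : ℝ} (hx : 1 ≤ x) :
    Real.Gamma (x + 1/2) ≤ x ^ (1/2:ℝ) * Real.Gamma x := by
  have hx0 : (0:ℝ) < x := lt_of_lt_of_le one_pos hx
  have := gamma_interp hx0
  linarith


lemma gamma_shift (j : ℕ) : ∃ c C : ℝ, 0 < c ∧ 0 < C ∧ ∀ x : ℝ, 1 ≤ x →
    c * x ^ ((j:ℝ)/2) * Real.Gamma x ≤ Real.Gamma (x + (j:ℝ)/2) ∧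
    Real.Gamma (x + (j:ℝ)/2) ≤ C * x ^ ((j:ℝ)/2) * Real.Gamma x := by
  induction j with
  | zero =>
    exact ⟨1, 1, one_pos, one_pos, fun x hx => by norm_num⟩
  | succ j ih =>
    obtain ⟨c, C, hc, hC, h⟩ := ih
    refine ⟨c/2, C * ((j:ℝ)+1) ^ (1/2:ℝ), by positivity, by positivity, fun x hx => ?_⟩
    have hx0 : (0:ℝ) < x := lt_of_lt_of_le one_pos hx
    have hj0 : (0:ℝ) ≤ (j:ℝ)/2 := by positivity
    have hxj : (1:ℝ) ≤ x + (j:ℝ)/2 := by linarith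
    have hxj0 : (0:ℝ) < x + (j:ℝ)/2 := by linarith
    have hG := Real.Gamma_pos_of_pos hx0
    have hGj := Real.Gamma_pos_of_pos hxj0
    have harg : x + ((j:ℕ)+1:ℝ)/2 = (x + (j:ℝ)/2) + 1/2 := by push_cast; ring
    have hexp : x ^ (((j:ℕ)+1:ℝ)/2) = x ^ ((j:ℝ)/2) * x ^ (1/2:ℝ) := by
      rw [← Real.rpow_add hx0]; push_cast; ring_nf
    have hsplit : (x:ℝ) ^ ((j:ℝ)/2) > 0 := Real.rpow_pos_of_pos hx0 _
    have hhalf : (0:ℝ) < x ^ (1/2:ℝ) := Real.rpow_pos_of_pos hx0 _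
    obtain ⟨hlo, hhi⟩ := h x hx
    push_cast
    constructor
    · -- lower bound
      have w := wendel_low hxj
      have step1 : x ^ (1/2:ℝ) ≤ (x + (j:ℝ)/2) ^ (1/2:ℝ) :=
        Real.rpow_le_rpow hx0.le (by linarith) (by norm_num)
      have : x ^ (1/2:ℝ)/2 * (c * x ^ ((j:ℝ)/2) * Real.Gamma x)
          ≤ Real.Gamma (x + (j:ℝ)/2 + 1/2) := by
        calc x ^ (1/2:ℝ)/2 * (c * x ^ ((j:ℝ)/2) * Real.Gamma x)
            ≤ x ^ (1/2:ℝ)/2 * Real.Gamma (x + (j:ℝ)/2) := by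
              apply mul_le_mul_of_nonneg_left hlo (by positivity)
          _ ≤ (x + (j:ℝ)/2) ^ (1/2:ℝ)/2 * Real.Gamma (x + (j:ℝ)/2) := by
              apply mul_le_mul_of_nonneg_right _ hGj.le
              linarith
          _ ≤ Real.Gamma (x + (j:ℝ)/2 + 1/2) := w
      rw [harg, hexp]
      calc c/2 * (x ^ ((j:ℝ)/2) * x ^ (1/2:ℝ)) * Real.Gamma x
          = x ^ (1/2:ℝ)/2 * (c * x ^ ((j:ℝ)/2) * Real.Gamma x) := by ring
        _ ≤ _ := this
    · -- upper bound
      have w := wendel_up hxj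
      have step1 : (x + (j:ℝ)/2) ^ (1/2:ℝ) ≤ (((j:ℝ)+1) * x) ^ (1/2:ℝ) :=
        Real.rpow_le_rpow hxj0.le (by nlinarith) (by norm_num)
      have step2 : (((j:ℝ)+1) * x) ^ (1/2:ℝ) = ((j:ℝ)+1) ^ (1/2:ℝ) * x ^ (1/2:ℝ) :=
        Real.mul_rpow (by positivity) hx0.le
      rw [harg, hexp]
      calc Real.Gamma (x + (j:ℝ)/2 + 1/2)
          ≤ (x + (j:ℝ)/2) ^ (1/2:ℝ) * Real.Gamma (x + (j:ℝ)/2) := w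
        _ ≤ (((j:ℝ)+1) ^ (1/2:ℝ) * x ^ (1/2:ℝ)) * Real.Gamma (x + (j:ℝ)/2) := by
            apply mul_le_mul_of_nonneg_right _ hGj.le
            rw [← step2]; exact step1
        _ ≤ (((j:ℝ)+1) ^ (1/2:ℝ) * x ^ (1/2:ℝ)) * (C * x ^ ((j:ℝ)/2) * Real.Gamma x) := by
            apply mul_le_mul_of_nonneg_left hhi (by positivity)
        _ = C * ((j:ℝ)+1) ^ (1/2:ℝ) * (x ^ ((j:ℝ)/2) * x ^ (1/2:ℝ)) * Real.Gamma x := by ring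

lemma gamma_ratio (a b : ℕ) : ∃ c C : ℝ, 0 < c ∧ 0 < C ∧ ∀ x : ℝ, 1 ≤ x →
    c * x ^ (((a:ℝ) - b)/2) ≤ Real.Gamma (x + (a:ℝ)/2) / Real.Gamma (x + (b:ℝ)/2) ∧
    Real.Gamma (x + (a:ℝ)/2) / Real.Gamma (x + (b:ℝ)/2) ≤ C * x ^ (((a:ℝ) - b)/2) := by
  obtain ⟨ca, Ca, hca, hCa, ha⟩ := gamma_shift a
  obtain ⟨cb, Cb, hcb, hCb, hb⟩ := gamma_shift b
  refine ⟨ca/Cb, Ca/cb, by positivity, by positivity, fun x hx => ?_⟩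
  have hx0 : (0:ℝ) < x := lt_of_lt_of_le one_pos hx
  have hG := Real.Gamma_pos_of_pos hx0
  have hGb := Real.Gamma_pos_of_pos (show (0:ℝ) < x + (b:ℝ)/2 by positivity)
  obtain ⟨ha1, ha2⟩ := ha x hx
  obtain ⟨hb1, hb2⟩ := hb x hx
  have hxe : x ^ (((a:ℝ) - b)/2) * x ^ ((b:ℝ)/2) = x ^ ((a:ℝ)/2) := by
    rw [← Real.rpow_add hx0]; ring_nf
  constructor
  · rw [le_div_iff₀ hGb]
    calc ca/Cb * x ^ (((a:ℝ)-b)/2) * Real.Gamma (x + (b:ℝ)/2)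
        ≤ ca/Cb * x ^ (((a:ℝ)-b)/2) * (Cb * x ^ ((b:ℝ)/2) * Real.Gamma x) :=
          mul_le_mul_of_nonneg_left hb2 (by positivity)
      _ = ca * (x ^ (((a:ℝ)-b)/2) * x ^ ((b:ℝ)/2)) * Real.Gamma x := by
          field_simp
      _ = ca * x ^ ((a:ℝ)/2) * Real.Gamma x := by rw [hxe]
      _ ≤ _ := ha1
  · rw [div_le_iff₀ hGb]
    calc Real.Gamma (x + (a:ℝ)/2)
        ≤ Ca * x ^ ((a:ℝ)/2) * Real.Gamma x := ha2
      _ = Ca/cb * x ^ (((a:ℝ)-b)/2) * (cb * x ^ ((b:ℝ)/2) * Real.Gamma x) := by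
          rw [← hxe]; field_simp
      _ ≤ Ca/cb * x ^ (((a:ℝ)-b)/2) * Real.Gamma (x + (b:ℝ)/2) :=
          mul_le_mul_of_nonneg_left hb1 (by positivity)


lemma gamma_ne {t : ℝ} (h : 0 < t) : Real.Gamma t ≠ 0 := (Real.Gamma_pos_of_pos h).ne'

lemma prodP (μ m : ℕ) :
    ∏ i ∈ Finset.range m, Real.Gamma ((i : ℝ) + μ + 3 / 2) / Real.Gamma ((i : ℝ) + 3 / 2)
      = (∏ j ∈ Finset.range μ, Real.Gamma ((m:ℝ) + 3/2 + j))
        / ∏ j ∈ Finset.range μ, Real.Gamma ((j:ℝ) + 3/2) := by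
  have f := fun t : ℕ => Real.Gamma ((t:ℝ) + 3/2)
  rw [Finset.prod_div_distrib]
  rw [div_eq_div_iff (Finset.prod_ne_zero_iff.2 (fun i _ => gamma_ne (by positivity)))
    (Finset.prod_ne_zero_iff.2 (fun j _ => gamma_ne (by positivity)))]
  have h1 : (∏ i ∈ Finset.range m, Real.Gamma ((i : ℝ) + μ + 3 / 2))
      * ∏ j ∈ Finset.range μ, Real.Gamma ((j:ℝ) + 3/2)
      = ∏ k ∈ Finset.range (μ + m), Real.Gamma ((k:ℝ) + 3/2) := by
    rw [Finset.prod_range_add (fun t : ℕ => Real.Gamma ((t:ℝ) + 3/2)) μ m, mul_comm]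
    congr 1
    refine Finset.prod_congr rfl fun i _ => ?_
    congr 1; push_cast; ring
  have h2 : (∏ j ∈ Finset.range μ, Real.Gamma ((m:ℝ) + 3/2 + j))
      * ∏ i ∈ Finset.range m, Real.Gamma ((i:ℝ) + 3/2)
      = ∏ k ∈ Finset.range (m + μ), Real.Gamma ((k:ℝ) + 3/2) := by
    rw [Finset.prod_range_add (fun t : ℕ => Real.Gamma ((t:ℝ) + 3/2)) m μ, mul_comm]
    congr 1
    refine Finset.prod_congr rfl fun j _ => ?_
    congr 1; push_cast; ring
  rw [h1, h2, Nat.add_comm]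

lemma prodQ (μ m n : ℕ) (hn : n = μ + 2 * m + 1) :
    ∏ k ∈ Finset.Icc (n - μ + 1) n, Real.Gamma (1 + (k : ℝ) / 2)
      = ∏ j ∈ Finset.range μ, Real.Gamma ((m:ℝ) + 3/2 + ((j:ℝ)+1)/2) := by
  have h1 : n - μ + 1 = 2 * m + 2 := by omega
  rw [h1, ← Finset.Ico_add_one_right_eq_Icc, Finset.prod_Ico_eq_prod_range]
  have h2 : n + 1 - (2 * m + 2) = μ := by omega
  rw [h2]
  refine Finset.prod_congr rfl fun j _ => ?_
  congr 1; push_cast; ring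

lemma sum_exps (μ : ℕ) :
    ∑ j ∈ Finset.range μ, (((j:ℝ) - 1)/2) = (μ:ℝ) * ((μ:ℝ) - 3) / 4 := by
  induction μ with
  | zero => simp
  | succ μ ih => rw [Finset.sum_range_succ, ih]; push_cast; ring

lemma rpow_compare {x z e : ℝ} (hx : 0 < x) (h1 : x ≤ z) (h2 : z ≤ 4*x) :
    z ^ e * (4:ℝ) ^ (-|e|) ≤ x ^ e ∧ x ^ e ≤ z ^ e * (4:ℝ) ^ |e| := by
  have hz : 0 < z := lt_of_lt_of_le hx h1
  have h4 : (0:ℝ) < 4 := by norm_num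
  rcases le_or_gt 0 e with he | he
  · rw [abs_of_nonneg he]
    constructor
    · have hzx : z / 4 ≤ x := by linarith
      calc z^e * 4^(-e) = (z/4)^e := by
            rw [Real.div_rpow hz.le h4.le, Real.rpow_neg h4.le, div_eq_mul_inv]
        _ ≤ x^e := Real.rpow_le_rpow (by positivity) hzx he
    · calc x^e ≤ z^e := Real.rpow_le_rpow hx.le h1 he
        _ ≤ z^e * 4^e := le_mul_of_one_le_right (by positivity) (Real.one_le_rpow (by norm_num) he)
  · rw [abs_of_neg he]
    constructor
    · calc z^e * 4^(-(-e)) ≤ z^e := by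
            rw [neg_neg]
            exact mul_le_of_le_one_right (by positivity)
              (Real.rpow_le_one_of_one_le_of_nonpos (by norm_num) he.le)
        _ ≤ x^e := Real.rpow_le_rpow_of_nonpos hx h1 he.le
    · have hzx : z / 4 ≤ x := by linarith
      calc x^e ≤ (z/4)^e := Real.rpow_le_rpow_of_nonpos (by positivity) hzx he.le
        _ = z^e * 4^(-e) := by
            rw [Real.div_rpow hz.le h4.le, Real.rpow_neg h4.le, div_eq_mul_inv]


end SymVolAux

theorem sym_volume_theta (μ : ℕ) (hμ : 1 ≤ μ) :
    ∃ c C : ℝ, 0 < c ∧ 0 < C ∧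
      ∀ᶠ m : ℕ in atTop,
        ∀ n : ℕ, n = μ + 2 * m + 1 →
          c * (n : ℝ) ^ (((μ * (μ + 1) : ℕ) : ℝ) / 4) ≤
              (n.choose μ : ℝ) *
                (∏ i ∈ Finset.range m,
                  Real.Gamma ((i : ℝ) + μ + 3 / 2) / Real.Gamma ((i : ℝ) + 3 / 2)) /
                (∏ k ∈ Finset.Icc (n - μ + 1) n, Real.Gamma (1 + (k : ℝ) / 2)) ∧
            (n.choose μ : ℝ) *
                (∏ i ∈ Finset.range m,
                  Real.Gamma ((i : ℝ) + μ + 3 / 2) / Real.Gamma ((i : ℝ) + 3 / 2)) /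
                (∏ k ∈ Finset.Icc (n - μ + 1) n, Real.Gamma (1 + (k : ℝ) / 2)) ≤
              C * (n : ℝ) ^ (((μ * (μ + 1) : ℕ) : ℝ) / 4) := by
  choose c C hc hC h using fun j : ℕ => SymVolAux.gamma_ratio (2*j) (j+1)
  set D : ℝ := ∏ j ∈ Finset.range μ, Real.Gamma ((j:ℝ) + 3/2) with hD
  have hDpos : 0 < D := Finset.prod_pos fun j _ => Real.Gamma_pos_of_pos (by positivity)
  set cP : ℝ := ∏ j ∈ Finset.range μ, c j with hcPdef
  set CP : ℝ := ∏ j ∈ Finset.range μ, C j with hCPdef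
  have hcP : 0 < cP := Finset.prod_pos fun j _ => hc j
  have hCP : 0 < CP := Finset.prod_pos fun j _ => hC j
  set e : ℝ := (μ:ℝ) * ((μ:ℝ) - 3) / 4 with he
  set kc : ℝ := (1/2:ℝ)^μ / (Nat.factorial μ) with hkc
  have hkcpos : 0 < kc := by positivity
  refine ⟨kc/D * cP * (4:ℝ)^(-|e|), (1/D) * CP * (4:ℝ)^|e|, by positivity, by positivity, ?_⟩
  filter_upwards [eventually_ge_atTop μ] with m hmμ
  intro n hn
  have hy1 : (1:ℝ) ≤ (m:ℝ) + 3/2 := by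
    have : (0:ℝ) ≤ (m:ℝ) := Nat.cast_nonneg m
    linarith
  have hypos : (0:ℝ) < (m:ℝ) + 3/2 := by linarith
  have hn0 : (0:ℝ) < (n:ℝ) := by
    have : 0 < n := by omega
    exact_mod_cast this
  -- rewrite the products
  rw [SymVolAux.prodP μ m, SymVolAux.prodQ μ m n hn]
  set A : ℝ := (n.choose μ : ℝ) with hA
  set Pnum : ℝ := ∏ j ∈ Finset.range μ, Real.Gamma ((m:ℝ) + 3/2 + j) with hPnum
  set Qp : ℝ := ∏ j ∈ Finset.range μ, Real.Gamma ((m:ℝ) + 3/2 + ((j:ℝ)+1)/2) with hQp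
  have hQppos : 0 < Qp := Finset.prod_pos fun j _ => Real.Gamma_pos_of_pos (by positivity)
  set R : ℝ := ∏ j ∈ Finset.range μ,
      Real.Gamma ((m:ℝ) + 3/2 + j) / Real.Gamma ((m:ℝ) + 3/2 + ((j:ℝ)+1)/2) with hR
  have hRprod : R = Pnum / Qp := Finset.prod_div_distrib _ _
  have hE : A * (Pnum / D) / Qp = (A/D) * R := by
    rw [hRprod]; field_simp
  rw [hE]
  -- per-factor bounds
  have hbound : ∀ j ∈ Finset.range μ,
      c j * ((m:ℝ) + 3/2) ^ (((j:ℝ)-1)/2)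
        ≤ Real.Gamma ((m:ℝ) + 3/2 + j) / Real.Gamma ((m:ℝ) + 3/2 + ((j:ℝ)+1)/2) ∧
      Real.Gamma ((m:ℝ) + 3/2 + j) / Real.Gamma ((m:ℝ) + 3/2 + ((j:ℝ)+1)/2)
        ≤ C j * ((m:ℝ) + 3/2) ^ (((j:ℝ)-1)/2) := by
    intro j _
    have hj := h j ((m:ℝ) + 3/2) hy1
    have e1 : (m:ℝ) + 3/2 + ((2*j:ℕ):ℝ)/2 = (m:ℝ) + 3/2 + j := by push_cast; ring
    have e2 : (m:ℝ) + 3/2 + ((j+1:ℕ):ℝ)/2 = (m:ℝ) + 3/2 + ((j:ℝ)+1)/2 := by push_cast; ring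
    have e3 : (((2*j:ℕ):ℝ) - ((j+1:ℕ):ℝ))/2 = ((j:ℝ)-1)/2 := by push_cast; ring
    rw [e1, e2, e3] at hj
    exact hj
  have hRnonneg : ∀ j ∈ Finset.range μ,
      0 ≤ Real.Gamma ((m:ℝ) + 3/2 + j) / Real.Gamma ((m:ℝ) + 3/2 + ((j:ℝ)+1)/2) := by
    intro j _
    exact div_nonneg (Real.Gamma_pos_of_pos (by positivity)).le
      (Real.Gamma_pos_of_pos (by positivity)).le
  have hprodlow : cP * ((m:ℝ) + 3/2) ^ e ≤ R := by
    have := Finset.prod_le_prod (s := Finset.range μ)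
      (f := fun j : ℕ => c j * ((m:ℝ) + 3/2) ^ (((j:ℝ)-1)/2))
      (fun j _ => (mul_pos (hc j) (Real.rpow_pos_of_pos hypos _)).le)
      (fun j hj => (hbound j hj).1)
    calc cP * ((m:ℝ) + 3/2) ^ e
        = ∏ j ∈ Finset.range μ, c j * ((m:ℝ) + 3/2) ^ (((j:ℝ)-1)/2) := by
          rw [Finset.prod_mul_distrib, ← Real.rpow_sum_of_pos hypos, SymVolAux.sum_exps]
      _ ≤ R := this
  have hprodhigh : R ≤ CP * ((m:ℝ) + 3/2) ^ e := by
    have := Finset.prod_le_prod (s := Finset.range μ)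
      (f := fun j : ℕ => Real.Gamma ((m:ℝ) + 3/2 + (j:ℝ)) / Real.Gamma ((m:ℝ) + 3/2 + ((j:ℝ)+1)/2))
      hRnonneg (fun j hj => (hbound j hj).2)
    calc R ≤ ∏ j ∈ Finset.range μ, C j * ((m:ℝ) + 3/2) ^ (((j:ℝ)-1)/2) := this
      _ = CP * ((m:ℝ) + 3/2) ^ e := by
          rw [Finset.prod_mul_distrib, ← Real.rpow_sum_of_pos hypos, SymVolAux.sum_exps]
  -- binomial bounds
  have hA1 : A ≤ (n:ℝ)^μ := by
    rw [hA]
    exact_mod_cast Nat.choose_le_pow n μ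
  have hA2 : (n:ℝ)^μ * kc ≤ A := by
    have hle := Nat.pow_le_choose (α := ℝ) μ n
    have h21 : n + 1 - μ = 2*m + 2 := by omega
    rw [h21] at hle
    have hmn : (n:ℝ)/2 ≤ ((2*m+2:ℕ):ℝ) := by
      push_cast
      have : (n:ℝ) = (μ:ℝ) + 2*(m:ℝ) + 1 := by exact_mod_cast congrArg (Nat.cast (R := ℝ)) hn
      have hm : (μ:ℝ) ≤ (m:ℝ) := by exact_mod_cast hmμ
      linarith
    have hpow : ((n:ℝ)/2)^μ ≤ ((2*m+2:ℕ):ℝ)^μ :=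
      pow_le_pow_left₀ (by positivity) hmn μ
    have : (n:ℝ)^μ * kc = ((n:ℝ)/2)^μ / (Nat.factorial μ) := by
      simp only [hkc, div_pow, one_pow]; ring
    rw [this]
    calc ((n:ℝ)/2)^μ / (Nat.factorial μ) ≤ ((2*m+2:ℕ):ℝ)^μ / (Nat.factorial μ) := by
          gcongr
      _ ≤ A := by exact_mod_cast hle
  have hA0 : (0:ℝ) ≤ A := by rw [hA]; positivity
  have hnr : (n:ℝ) = (μ:ℝ) + 2*(m:ℝ) + 1 := by exact_mod_cast congrArg (Nat.cast (R := ℝ)) hn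
  have hmr : (μ:ℝ) ≤ (m:ℝ) := by exact_mod_cast hmμ
  have hμr : (1:ℝ) ≤ (μ:ℝ) := by exact_mod_cast hμ
  obtain ⟨hy_low, hy_high⟩ := SymVolAux.rpow_compare (x := (m:ℝ)+3/2) (z := (n:ℝ)) (e := e)
    hypos (by linarith) (by linarith)
  have hEX : (n:ℝ) ^ (((μ * (μ + 1) : ℕ) : ℝ) / 4) = (n:ℝ)^μ * (n:ℝ)^e := by
    have h1 : (((μ * (μ + 1) : ℕ) : ℝ) / 4) = (μ:ℝ) + e := by rw [he]; push_cast; ring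
    rw [h1, Real.rpow_add hn0, Real.rpow_natCast]
  constructor
  · rw [hEX]
    calc kc/D * cP * (4:ℝ)^(-|e|) * ((n:ℝ)^μ * (n:ℝ)^e)
        = ((n:ℝ)^μ * kc / D) * (cP * ((n:ℝ)^e * (4:ℝ)^(-|e|))) := by ring
      _ ≤ ((n:ℝ)^μ * kc / D) * (cP * ((m:ℝ)+3/2)^e) := by
          apply mul_le_mul_of_nonneg_left (mul_le_mul_of_nonneg_left hy_low hcP.le)
          positivity
      _ ≤ (A / D) * (cP * ((m:ℝ)+3/2)^e) := by
          apply mul_le_mul_of_nonneg_right _ (by positivity)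
          gcongr
      _ ≤ (A / D) * R := by
          apply mul_le_mul_of_nonneg_left hprodlow
          positivity
  · rw [hEX]
    calc (A/D) * R
        ≤ (A/D) * (CP * ((m:ℝ)+3/2)^e) := by
          apply mul_le_mul_of_nonneg_left hprodhigh
          positivity
      _ ≤ ((n:ℝ)^μ/D) * (CP * ((n:ℝ)^e * (4:ℝ)^|e|)) := by
          apply mul_le_mul
          · gcongr
          · exact mul_le_mul_of_nonneg_left hy_high hCP.le
          · positivity
          · positivity
      _ = 1/D * CP * (4:ℝ)^|e| * ((n:ℝ)^μ * (n:ℝ)^e) := by ring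
end

section
/- For a nonsingular real symmetric n×n matrix Q with eigenvalues λ_1(Q), …, λ_n(Q), the Frobenius distance from Q to the set Z^μ of symmetric matrices of corank at least μ equals the square root of the sum of the squares of the μ smallest (in absolute value) eigenvalues of Q. -/
open Finset Matrix

noncomputable def toE {n : ℕ} (x : Fin n → ℝ) : EuclideanSpace ℝ (Fin n) :=
  (WithLp.equiv 2 (Fin n → ℝ)).symm x

@[simp] lemma toE_apply {n : ℕ} (x : Fin n → ℝ) (i : Fin n) : toE x i = x i := rfl

lemma symmQ {n : ℕ} (Q : Matrix (Fin n) (Fin n) ℝ) (hQ : Q.IsHermitian) :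
    ∀ x y : EuclideanSpace ℝ (Fin n),
      (inner ℝ (toE (Q *ᵥ x)) y : ℝ) = inner ℝ x (toE (Q *ᵥ y)) := by
  have hQs : ∀ i j, Q i j = Q j i := fun i j => (by simpa using hQ.apply i j : Q j i = Q i j).symm
  intro x y
  simp only [PiLp.inner_apply, RCLike.inner_apply, starRingEnd_apply, star_trivial,
    toE_apply, Matrix.mulVec, dotProduct, Finset.sum_mul, Finset.mul_sum]
  rw [Finset.sum_comm]
  refine Finset.sum_congr rfl fun i _ => Finset.sum_congr rfl fun j _ => ?_
  rw [hQs j i]; ring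

lemma inner_self_sum {n : ℕ} (x : EuclideanSpace ℝ (Fin n)) :
    (inner ℝ x x : ℝ) = ∑ i, x i ^ 2 := by
  rw [PiLp.inner_apply]
  exact Finset.sum_congr rfl fun i _ => by simp only [RCLike.inner_apply, conj_trivial, sq]

lemma norm_sq_sum {n : ℕ} (x : EuclideanSpace ℝ (Fin n)) :
    ‖x‖ ^ 2 = ∑ i, x i ^ 2 := by
  rw [← real_inner_self_eq_norm_sq, inner_self_sum]

theorem weight_ineq {n : ℕ} (μ : ℕ) (s : Finset (Fin n)) (hs : s.card = μ)
    (hne : s.Nonempty) (lam t : Fin n → ℝ)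
    (hmin : ∀ i ∈ s, ∀ j ∉ s, lam i ^ 2 ≤ lam j ^ 2)
    (ht0 : ∀ i, 0 ≤ t i) (ht1 : ∀ i, t i ≤ 1) (htsum : (μ : ℝ) ≤ ∑ i, t i) :
    ∑ i ∈ s, lam i ^ 2 ≤ ∑ i, lam i ^ 2 * t i := by
  obtain ⟨i0, hi0, hMi0⟩ := Finset.exists_mem_eq_sup' hne (fun i => lam i ^ 2)
  set M := s.sup' hne (fun i => lam i ^ 2) with hM
  have hM0 : 0 ≤ M := by rw [hMi0]; positivity
  have hle : ∀ i ∈ s, lam i ^ 2 ≤ M := fun i hi => Finset.le_sup' (fun i => lam i ^ 2) hi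
  have hge : ∀ j ∉ s, M ≤ lam j ^ 2 := fun j hj =>
    Finset.sup'_le hne _ (fun i hi => hmin i hi j hj)
  have hsplit : ∑ i, lam i ^ 2 * t i - ∑ i ∈ s, lam i ^ 2
      = ∑ i ∈ s, lam i ^ 2 * (t i - 1) + ∑ i ∈ sᶜ, lam i ^ 2 * t i := by
    have h := Finset.sum_add_sum_compl s (fun i => lam i ^ 2 * t i)
    have h2 : ∑ i ∈ s, lam i ^ 2 * (t i - 1)
        = (∑ i ∈ s, lam i ^ 2 * t i) - ∑ i ∈ s, lam i ^ 2 := by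
      rw [← Finset.sum_sub_distrib]; exact Finset.sum_congr rfl fun i _ => by ring
    simp only [← h, h2]; ring
  have h1 : ∑ i ∈ s, M * (t i - 1) ≤ ∑ i ∈ s, lam i ^ 2 * (t i - 1) :=
    Finset.sum_le_sum fun i hi =>
      mul_le_mul_of_nonpos_right (hle i hi) (by linarith [ht1 i])
  have h2 : ∑ i ∈ sᶜ, M * t i ≤ ∑ i ∈ sᶜ, lam i ^ 2 * t i :=
    Finset.sum_le_sum fun i hi =>
      mul_le_mul_of_nonneg_right (hge i (Finset.mem_compl.mp hi)) (ht0 i)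
  have h3 : ∑ i ∈ s, M * (t i - 1) + ∑ i ∈ sᶜ, M * t i = M * (∑ i, t i - μ) := by
    have hh := Finset.sum_add_sum_compl s t
    rw [← Finset.mul_sum, ← Finset.mul_sum, ← mul_add]
    congr 1
    rw [Finset.sum_sub_distrib, Finset.sum_const, hs, nsmul_eq_mul, mul_one]
    linarith
  nlinarith [mul_nonneg hM0 (sub_nonneg.mpr htsum)]

theorem lb (n μ : ℕ) (hμ : 1 ≤ μ) (hμn : μ ≤ n)
    (Q : Matrix (Fin n) (Fin n) ℝ) (hQ : Q.IsHermitian)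
    (s : Finset (Fin n)) (hs : s.card = μ)
    (hmin : ∀ i ∈ s, ∀ j ∉ s, |hQ.eigenvalues i| ≤ |hQ.eigenvalues j|)
    (X : Matrix (Fin n) (Fin n) ℝ) (hX : X.rank ≤ n - μ) :
    ∑ i ∈ s, hQ.eigenvalues i ^ 2 ≤ ∑ i, ∑ j, (Q i j - X i j) ^ 2 := by
  classical
  set lam := hQ.eigenvalues with hlam
  set e := WithLp.linearEquiv 2 ℝ (Fin n → ℝ) with he
  set K : Submodule ℝ (EuclideanSpace ℝ (Fin n)) :=
    (LinearMap.ker X.mulVecLin).comap e.toLinearMap with hKdef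
  have hKfin : μ ≤ Module.finrank ℝ K := by
    have h1 : Module.finrank ℝ K
        = Module.finrank ℝ (LinearMap.ker X.mulVecLin) := by
      rw [hKdef, Submodule.comap_equiv_eq_map_symm]
      exact (LinearEquiv.finrank_map_eq e.symm _)
    have h2 := LinearMap.finrank_range_add_finrank_ker X.mulVecLin
    have h3 : Module.finrank ℝ (Fin n → ℝ) = n := by
      simp [Module.finrank_pi]
    rw [h3] at h2
    have h4 : X.rank = Module.finrank ℝ (LinearMap.range X.mulVecLin) := rfl
    omega
  set B := stdOrthonormalBasis ℝ K with hB
  set v : Fin μ → EuclideanSpace ℝ (Fin n) :=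
    fun k => (B (Fin.castLE hKfin k) : EuclideanSpace ℝ (Fin n)) with hv
  have hvon : Orthonormal ℝ v := by
    have h1 : Orthonormal ℝ (fun k => B (Fin.castLE hKfin k)) :=
      B.orthonormal.comp _ (Fin.castLE_injective hKfin)
    exact h1.comp_linearIsometry K.subtypeₗᵢ
  have hvker : ∀ k, X *ᵥ (v k) = 0 := by
    intro k
    have h2 := Submodule.mem_comap.mp (B (Fin.castLE hKfin k)).2
    exact h2
  set u := hQ.eigenvectorBasis with hu
  set c : Fin μ → Fin n → ℝ := fun k i => (inner ℝ (u i) (v k) : ℝ) with hc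
  -- Parseval for each v k
  have hPar : ∀ k, ∑ i, c k i ^ 2 = 1 := by
    intro k
    have h := u.sum_inner_mul_inner (v k) (v k)
    have hnorm : (inner ℝ (v k) (v k) : ℝ) = 1 := by
      rw [real_inner_self_eq_norm_sq, hvon.1 k]; norm_num
    calc ∑ i, c k i ^ 2 = ∑ i, (inner ℝ (v k) (u i) : ℝ) * inner ℝ (u i) (v k) := by
          refine Finset.sum_congr rfl fun i _ => ?_
          rw [hc]; simp only []; rw [real_inner_comm (u i) (v k)]; ring
      _ = 1 := by rw [h, hnorm]
  -- action of Q in coordinates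
  have hQv : ∀ k i, (inner ℝ (u i) (toE (Q *ᵥ v k)) : ℝ) = lam i * c k i := by
    intro k i
    rw [← symmQ Q hQ]
    have hm : toE (Q *ᵥ ⇑(u i)) = lam i • u i := by
      have := hQ.mulVec_eigenvectorBasis i
      ext r
      rw [toE_apply, this]
      rfl
    have : toE (Q *ᵥ (u i : EuclideanSpace ℝ (Fin n))) = lam i • u i := hm
    rw [this, real_inner_smul_left]
  have hnormQv : ∀ k, ∑ r, ((Q *ᵥ v k) r) ^ 2 = ∑ i, (lam i * c k i) ^ 2 := by
    intro k
    have h := u.sum_inner_mul_inner (toE (Q *ᵥ v k)) (toE (Q *ᵥ v k))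
    have h2 : ∀ i, (inner ℝ (toE (Q *ᵥ v k)) (u i) : ℝ) = lam i * c k i := by
      intro i; rw [real_inner_comm]; exact hQv k i
    rw [inner_self_sum] at h
    calc ∑ r, ((Q *ᵥ v k) r) ^ 2 = ∑ r, (toE (Q *ᵥ v k)) r ^ 2 := by simp
      _ = ∑ i, (lam i * c k i) ^ 2 := by
          rw [← h]
          refine Finset.sum_congr rfl fun i _ => ?_
          rw [h2 i, hQv k i]; ring
  -- Bessel
  have hBessel : ∀ x : EuclideanSpace ℝ (Fin n),
      ∑ k, (inner ℝ x (v k) : ℝ) ^ 2 ≤ ∑ r, x r ^ 2 := by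
    intro x
    have h := hvon.sum_inner_products_le (s := Finset.univ) x
    rw [norm_sq_sum] at h
    refine le_trans (le_of_eq ?_) h
    refine Finset.sum_congr rfl fun k _ => ?_
    rw [real_inner_comm, Real.norm_eq_abs, sq_abs]
  -- weights
  set t : Fin n → ℝ := fun i => ∑ k, c k i ^ 2 with htdef
  have ht0 : ∀ i, 0 ≤ t i := fun i => Finset.sum_nonneg fun k _ => sq_nonneg _
  have ht1 : ∀ i, t i ≤ 1 := by
    intro i
    have h := hBessel (u i)
    have h2 : ∑ r, (u i : EuclideanSpace ℝ (Fin n)) r ^ 2 = 1 := by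
      rw [← norm_sq_sum, u.orthonormal.1 i]; norm_num
    rw [h2] at h
    refine le_trans (le_of_eq ?_) h
    exact Finset.sum_congr rfl fun k _ => rfl
  have htsum : (μ : ℝ) = ∑ i, t i := by
    rw [htdef]
    simp only []
    rw [Finset.sum_comm]
    rw [Finset.sum_congr rfl fun k _ => hPar k]
    simp
  have hmin' : ∀ i ∈ s, ∀ j ∉ s, lam i ^ 2 ≤ lam j ^ 2 := by
    intro i hi j hj
    have := hmin i hi j hj
    rw [← sq_abs (lam i), ← sq_abs (lam j)]
    exact pow_le_pow_left₀ (abs_nonneg _) this 2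
  have hne : s.Nonempty := Finset.card_pos.mp (by omega)
  calc ∑ i ∈ s, lam i ^ 2
      ≤ ∑ i, lam i ^ 2 * t i := weight_ineq μ s hs hne lam t hmin' ht0 ht1 (le_of_eq htsum)
    _ = ∑ k, ∑ i, (lam i * c k i) ^ 2 := by
        rw [Finset.sum_comm]
        refine Finset.sum_congr rfl fun i _ => ?_
        rw [htdef]; simp only []
        rw [Finset.mul_sum]
        exact Finset.sum_congr rfl fun k _ => by ring
    _ = ∑ k, ∑ r, ((Q *ᵥ v k) r) ^ 2 := by
        exact Finset.sum_congr rfl fun k _ => (hnormQv k).symm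
    _ = ∑ k, ∑ r, (((Q - X) *ᵥ v k) r) ^ 2 := by
        refine Finset.sum_congr rfl fun k _ => Finset.sum_congr rfl fun r _ => ?_
        rw [Matrix.sub_mulVec, hvker k, sub_zero]
    _ = ∑ r, ∑ k, (inner ℝ (toE (fun j => Q r j - X r j)) (v k) : ℝ) ^ 2 := by
        rw [Finset.sum_comm]
        refine Finset.sum_congr rfl fun r _ => Finset.sum_congr rfl fun k _ => ?_
        congr 1
        simp [Matrix.mulVec, dotProduct, PiLp.inner_apply, mul_comm]
    _ ≤ ∑ r, ∑ j, (Q r j - X r j) ^ 2 := by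
        refine Finset.sum_le_sum fun r _ => ?_
        have h := hBessel (toE (fun j => Q r j - X r j))
        refine le_trans h (le_of_eq ?_)
        exact Finset.sum_congr rfl fun j _ => by rw [toE_apply]


theorem witness (n μ : ℕ) (hμn : μ ≤ n)
    (Q : Matrix (Fin n) (Fin n) ℝ) (hQ : Q.IsHermitian)
    (s : Finset (Fin n)) (hs : s.card = μ) :
    ∃ X : Matrix (Fin n) (Fin n) ℝ, X.IsHermitian ∧ X.rank ≤ n - μ ∧
      ∑ i, ∑ j, (Q i j - X i j) ^ 2 = ∑ i ∈ s, hQ.eigenvalues i ^ 2 := by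
  classical
  set lam := hQ.eigenvalues with hlam
  set U : Matrix (Fin n) (Fin n) ℝ := (hQ.eigenvectorUnitary : Matrix (Fin n) (Fin n) ℝ)
    with hU
  have hU1 : star U * U = 1 := Matrix.mem_unitaryGroup_iff'.mp hQ.eigenvectorUnitary.2
  have hU2 : U * star U = 1 := Matrix.mem_unitaryGroup_iff.mp hQ.eigenvectorUnitary.2
  have hdetU : IsUnit U.det := by
    have := congr_arg Matrix.det hU2
    rw [Matrix.det_mul, Matrix.det_one] at this
    exact IsUnit.of_mul_eq_one _ this
  have hdetUs : IsUnit (star U).det := by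
    have := congr_arg Matrix.det hU1
    rw [Matrix.det_mul, Matrix.det_one] at this
    exact IsUnit.of_mul_eq_one _ this
  set d : Fin n → ℝ := fun i => if i ∈ s then 0 else lam i with hd
  set d' : Fin n → ℝ := fun i => if i ∈ s then lam i else 0 with hd'
  set X : Matrix (Fin n) (Fin n) ℝ := U * diagonal d * star U with hX
  have hspec : Q = U * diagonal lam * star U := by
    have h := hQ.spectral_theorem
    rw [Unitary.conjStarAlgAut_apply] at h
    exact h.trans (by simp [hU, hlam, RCLike.ofReal_real_eq_id])
  have hdd : diagonal lam - diagonal d = diagonal d' := by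
    ext i j
    rw [Matrix.sub_apply]
    by_cases hij : i = j
    · subst hij
      rw [Matrix.diagonal_apply_eq, Matrix.diagonal_apply_eq, Matrix.diagonal_apply_eq]
      by_cases hi : i ∈ s <;> simp [hd, hd', hi]
    · rw [Matrix.diagonal_apply_ne _ hij, Matrix.diagonal_apply_ne _ hij,
        Matrix.diagonal_apply_ne _ hij, sub_zero]
  have hQX : Q - X = U * diagonal d' * star U := by
    rw [hspec, hX, ← Matrix.sub_mul, ← Matrix.mul_sub, hdd]
  refine ⟨X, ?_, ?_, ?_⟩
  · rw [hX, Matrix.star_eq_conjTranspose]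
    exact Matrix.isHermitian_mul_mul_conjTranspose U (Matrix.isHermitian_diagonal d)
  · rw [hX, Matrix.mul_assoc]
    rw [Matrix.rank_mul_eq_right_of_isUnit_det U (diagonal d * star U) hdetU]
    rw [Matrix.rank_mul_eq_left_of_isUnit_det (star U) (diagonal d) hdetUs]
    rw [Matrix.rank_diagonal]
    have hsub : Finset.univ.filter (fun i => d i ≠ 0) ⊆ sᶜ := by
      intro i hi
      rw [Finset.mem_filter] at hi
      rw [Finset.mem_compl]
      intro hmem
      exact hi.2 (by simp [hd, hmem])
    calc Fintype.card {i // d i ≠ 0} = (Finset.univ.filter (fun i => d i ≠ 0)).card :=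
          Fintype.card_subtype _
      _ ≤ sᶜ.card := Finset.card_le_card hsub
      _ = n - μ := by rw [Finset.card_compl, hs]; simp
  · have hA : (Q - X).IsHermitian := by
      rw [hQX, Matrix.star_eq_conjTranspose]
      exact Matrix.isHermitian_mul_mul_conjTranspose U (Matrix.isHermitian_diagonal d')
    have htrace : ∑ i, ∑ j, (Q i j - X i j) ^ 2 = ((Q - X) * (Q - X)).trace := by
      rw [Matrix.trace]
      refine Finset.sum_congr rfl fun i _ => ?_
      rw [Matrix.diag_apply, Matrix.mul_apply]
      refine Finset.sum_congr rfl fun j _ => ?_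
      have hsymm : (Q - X) j i = (Q - X) i j := (hA.apply j i).symm.trans (star_trivial _)
      rw [hsymm, Matrix.sub_apply]
      ring
    rw [htrace]
    have hmul : (Q - X) * (Q - X) = U * (diagonal d' * diagonal d') * star U := by
      rw [hQX]
      calc U * diagonal d' * star U * (U * diagonal d' * star U)
          = U * diagonal d' * (star U * U) * diagonal d' * star U := by
            simp only [Matrix.mul_assoc]
        _ = U * (diagonal d' * diagonal d') * star U := by
            rw [hU1]
            simp only [Matrix.mul_one, Matrix.mul_assoc]
    rw [hmul, Matrix.trace_mul_comm (U * (diagonal d' * diagonal d')) (star U)]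
    rw [← Matrix.mul_assoc, hU1, Matrix.one_mul, Matrix.diagonal_mul_diagonal,
      Matrix.trace_diagonal]
    rw [← Finset.sum_filter_add_sum_filter_not Finset.univ (fun i => i ∈ s)]
    have h2 : ∑ i ∈ Finset.univ.filter (fun i => ¬ i ∈ s), d' i * d' i = 0 := by
      refine Finset.sum_eq_zero fun i hi => ?_
      rw [Finset.mem_filter] at hi
      simp [hd', hi.2]
    rw [h2, add_zero]
    have h3 : Finset.univ.filter (fun i => i ∈ s) = s := by
      ext i; simp
    rw [h3]
    refine Finset.sum_congr rfl fun i hi => ?_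
    simp [hd', hi]
    ring


/-- Frobenius distance from a nonsingular real symmetric matrix `Q` to the set of
symmetric matrices of corank at least `μ` equals the square root of the sum of the
squares of the `μ` smallest (in absolute value) eigenvalues of `Q`. -/
theorem eckart_young_symmetric (n μ : ℕ) (hμ : 1 ≤ μ) (hμn : μ ≤ n)
    (Q : Matrix (Fin n) (Fin n) ℝ) (hQ : Q.IsHermitian) (hdet : Q.det ≠ 0)
    (s : Finset (Fin n)) (hs : s.card = μ)
    (hmin : ∀ i ∈ s, ∀ j ∉ s, |hQ.eigenvalues i| ≤ |hQ.eigenvalues j|) :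
    sInf {d : ℝ | ∃ X : Matrix (Fin n) (Fin n) ℝ, X.IsHermitian ∧
        X.rank ≤ n - μ ∧ d = Real.sqrt (∑ i, ∑ j, (Q i j - X i j) ^ 2)} =
      Real.sqrt (∑ i ∈ s, hQ.eigenvalues i ^ 2) := by
  have hlbset : ∀ d ∈ {d : ℝ | ∃ X : Matrix (Fin n) (Fin n) ℝ, X.IsHermitian ∧
      X.rank ≤ n - μ ∧ d = Real.sqrt (∑ i, ∑ j, (Q i j - X i j) ^ 2)},
      Real.sqrt (∑ i ∈ s, hQ.eigenvalues i ^ 2) ≤ d := by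
    rintro d ⟨X, hXh, hXr, rfl⟩
    exact Real.sqrt_le_sqrt (lb n μ hμ hμn Q hQ s hs hmin X hXr)
  obtain ⟨X0, hX0h, hX0r, hX0eq⟩ := witness n μ hμn Q hQ s hs
  have hmem : Real.sqrt (∑ i ∈ s, hQ.eigenvalues i ^ 2) ∈
      {d : ℝ | ∃ X : Matrix (Fin n) (Fin n) ℝ, X.IsHermitian ∧
        X.rank ≤ n - μ ∧ d = Real.sqrt (∑ i, ∑ j, (Q i j - X i j) ^ 2)} :=
    ⟨X0, hX0h, hX0r, by rw [hX0eq]⟩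
  exact le_antisymm (csInf_le ⟨_, hlbset⟩ hmem) (le_csInf ⟨_, hmem⟩ hlbset)
end
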